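/- arXiv:2106.05512 — 5 statements merged into one kernel-verified Lean document; each statement's English description precedes it below -/
import Mathlib

section
/- Let (μ^ε)_{ε>0} be finite Borel measures on C_d such that for every C ∈ (0,∞), limsup_{ε→0} ε² log ∫_{C_d} exp(C ε^{-2}(1+‖η‖_*)) μ^ε(dη) < ∞. Let c_R, c_A ∈ (0,∞) and for each ε > 0 let R̄^ε, Ā^ε: C_d → ℝ be Borel measurable with R̄^ε(η) ≤ c_R(1+‖η‖_*) and |Ā^ε(η)| ≤ c_A(1+‖η‖_*) for all η ∈ C_d and all ε > 0. Then limsup_{ε→0} ε² log ∫_{C_d} exp(ε^{-1} Ā^ε(η) + ε^{-2} R̄^ε(η)) μ^ε(dη) ≤ limsup_{ε→0} ε² log ∫_{C_d} exp(ε^{-2} R̄^ε(η)) μ^ε(dη). -/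
open MeasureTheory Set Filter Topology
open scoped ENNReal

private lemma ereal_le_of_forall_add {a b : EReal} (h : ∀ δ : ℝ, 0 < δ → a ≤ (δ:EReal) + b) :
    a ≤ b := by
  induction b with
  | bot => simpa using h 1 one_pos
  | coe r =>
    induction a with
    | bot => exact bot_le
    | coe s =>
      norm_cast
      refine le_of_forall_pos_le_add fun δ hδ => ?_
      have := h δ hδ; norm_cast at this; linarith
    | top =>
      have := h 1 one_pos
      rw [top_le_iff, show ((1:ℝ):EReal) + (r:EReal) = ((1+r:ℝ):EReal) from by norm_cast] at this
      exact absurd this (EReal.coe_ne_top _)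
  | top => exact le_top

private lemma coe_mul_coe_add {c r : ℝ} (hc : 0 < c) (x : EReal) :
    (c:EReal) * ((r:EReal) + x) = ((c*r : ℝ):EReal) + (c:EReal) * x := by
  induction x with
  | bot => simp [EReal.mul_bot_of_pos (show (0:EReal) < c by exact_mod_cast hc)]
  | coe s => norm_cast; ring
  | top =>
    rw [EReal.coe_add_top, EReal.mul_top_of_pos (show (0:EReal) < c by exact_mod_cast hc),
      EReal.coe_add_top]

private lemma ereal_mul_max {c : ℝ} (hc : 0 ≤ c) (x y : EReal) :
    (c:EReal) * max x y = max ((c:EReal)*x) ((c:EReal)*y) := by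
  have hc' : (0:EReal) ≤ c := by exact_mod_cast hc
  rcases le_total x y with h | h
  · rw [max_eq_right h, max_eq_right (mul_le_mul_of_nonneg_left h hc')]
  · rw [max_eq_left h, max_eq_left (mul_le_mul_of_nonneg_left h hc')]

private lemma limsup_max_le' {α : Type*} {f : Filter α} {u v : α → EReal} {a b : EReal}
    (hu : Filter.limsup u f ≤ a) (hv : Filter.limsup v f ≤ b) :
    Filter.limsup (fun x => max (u x) (v x)) f ≤ max a b := by
  refine le_of_forall_gt_imp_ge_of_dense fun c hc => ?_
  have h1 : ∀ᶠ x in f, u x < c :=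
    eventually_lt_of_limsup_lt (hu.trans_lt ((le_max_left a b).trans_lt hc))
  have h2 : ∀ᶠ x in f, v x < c :=
    eventually_lt_of_limsup_lt (hv.trans_lt ((le_max_right a b).trans_lt hc))
  exact limsup_le_of_le (by isBoundedDefault)
    ((h1.and h2).mono fun x ⟨p, q⟩ => (max_lt p q).le)

private lemma ereal_le_of_forall_max {a b M : EReal} (hM : M ≠ ⊤)
    (h : ∀ L : ℝ, 0 < L → a ≤ max b (((-L : ℝ) : EReal) + M)) : a ≤ b := by
  refine le_of_forall_gt_imp_ge_of_dense fun c hc => ?_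
  induction c with
  | top => exact le_top
  | bot => exact absurd hc (by simp)
  | coe r =>
    induction M with
    | top => exact absurd rfl hM
    | bot =>
      have := h 1 one_pos
      simpa using this.trans (max_le hc.le (by simp))
    | coe m =>
      have hL : (0:ℝ) < max 1 (m - r) := lt_of_lt_of_le one_pos (le_max_left _ _)
      refine (h _ hL).trans (max_le hc.le ?_)
      rw [show ((-(max 1 (m-r)):ℝ):EReal) + (m:EReal) = ((m - max 1 (m-r) : ℝ):EReal) by
        norm_cast; ring]
      exact_mod_cast (by linarith [le_max_right 1 (m - r)] : m - max 1 (m-r) ≤ r)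

private lemma limsup_const_add_le {α : Type*} {f : Filter α} [f.NeBot] (c : ℝ) (v : α → EReal) :
    Filter.limsup (fun x => (c:EReal) + v x) f ≤ (c:EReal) + Filter.limsup v f := by
  have h := EReal.limsup_add_le (f := f) (u := fun _ => (c:EReal)) (v := v)
    (by rw [limsup_const]; exact Or.inl (EReal.coe_ne_bot c))
    (by rw [limsup_const]; exact Or.inl (EReal.coe_ne_top c))
  rwa [limsup_const] at h

noncomputable section

/-- `C([0,T]; ℝ^d)` with the supremum norm. -/
abbrev Pth (T : ℝ) (p : ℕ) := C(Set.Icc (0:ℝ) T, EuclideanSpace ℝ (Fin p))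

set_option maxHeartbeats 1000000 in
/-- **Lemma 5.2, first part (`llimsup`, inequality (5.125)).**
If the measures `μ^ε` on `C_d` have exponential moments of all linear-growth functionals
(in the sense of Lemma 5.1), and `R̄^ε ≤ c_R(1+‖·‖_*)`, `|Ā^ε| ≤ c_A(1+‖·‖_*)`, then the
`ε⁻¹`-order term `Ā^ε` can be discarded in the Laplace asymptotics:
`limsup ε² log ∫ e^{ε⁻¹Ā^ε + ε⁻²R̄^ε} dμ^ε ≤ limsup ε² log ∫ e^{ε⁻²R̄^ε} dμ^ε`. -/
theorem limsup_exp_linear_term_negligible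
    {T : ℝ} (hT : 0 < T) {d : ℕ}
    [MeasurableSpace (Pth T d)] [BorelSpace (Pth T d)]
    (μ : ℝ → Measure (Pth T d)) (hfin : ∀ ε ∈ Ioi (0:ℝ), IsFiniteMeasure (μ ε))
    (hexp : ∀ C : ℝ, 0 < C →
      Filter.limsup
        (fun ε : ℝ => ((ε ^ 2 : ℝ) : EReal) *
          ENNReal.log (∫⁻ η, ENNReal.ofReal (Real.exp (C * ε⁻¹ ^ 2 * (1 + ‖η‖))) ∂(μ ε)))
        (𝓝[>] (0:ℝ)) < ⊤)
    (cR cA : ℝ) (hcR : 0 < cR) (hcA : 0 < cA)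
    (R A : ℝ → Pth T d → ℝ)
    (hRmeas : ∀ ε ∈ Ioi (0:ℝ), Measurable (R ε))
    (hAmeas : ∀ ε ∈ Ioi (0:ℝ), Measurable (A ε))
    (hR : ∀ ε ∈ Ioi (0:ℝ), ∀ η : Pth T d, R ε η ≤ cR * (1 + ‖η‖))
    (hA : ∀ ε ∈ Ioi (0:ℝ), ∀ η : Pth T d, |A ε η| ≤ cA * (1 + ‖η‖)) :
    Filter.limsup
        (fun ε : ℝ => ((ε ^ 2 : ℝ) : EReal) *
          ENNReal.log (∫⁻ η, ENNReal.ofReal (Real.exp (ε⁻¹ * A ε η + ε⁻¹ ^ 2 * R ε η)) ∂(μ ε)))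
        (𝓝[>] (0:ℝ))
      ≤ Filter.limsup
        (fun ε : ℝ => ((ε ^ 2 : ℝ) : EReal) *
          ENNReal.log (∫⁻ η, ENNReal.ofReal (Real.exp (ε⁻¹ ^ 2 * R ε η)) ∂(μ ε)))
        (𝓝[>] (0:ℝ)) := by
  have hC0 : (0:ℝ) < cR + cA + 1 := by positivity
  set l := 𝓝[>] (0:ℝ) with hl
  set Gf : ℝ → EReal := fun ε => ((ε ^ 2 : ℝ) : EReal) *
      ENNReal.log (∫⁻ η, ENNReal.ofReal
        (Real.exp ((cR + cA + 1) * ε⁻¹ ^ 2 * (1 + ‖η‖))) ∂(μ ε)) with hGf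
  set rhsf : ℝ → EReal := fun ε => ((ε ^ 2 : ℝ) : EReal) *
      ENNReal.log (∫⁻ η, ENNReal.ofReal (Real.exp (ε⁻¹ ^ 2 * R ε η)) ∂(μ ε)) with hrhsf
  set lhsf : ℝ → EReal := fun ε => ((ε ^ 2 : ℝ) : EReal) *
      ENNReal.log (∫⁻ η, ENNReal.ofReal
        (Real.exp (ε⁻¹ * A ε η + ε⁻¹ ^ 2 * R ε η)) ∂(μ ε)) with hlhsf
  have hM : Filter.limsup Gf l ≠ ⊤ := (hexp _ hC0).ne
  refine ereal_le_of_forall_max (M := Filter.limsup Gf l) hM fun L hL => ?_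
  set F1 : ℝ → EReal := fun ε =>
      ((ε^2 * Real.log (2 * Real.exp (ε⁻¹ * (cA * (1 + L)))) : ℝ) : EReal) + rhsf ε with hF1
  set F2 : ℝ → EReal := fun ε =>
      ((ε^2 * Real.log (2 * Real.exp (-((1 + L) * ε⁻¹ ^ 2))) : ℝ) : EReal) + Gf ε with hF2
  have hmem : ∀ᶠ ε in l, ε ∈ Ioc (0:ℝ) 1 :=
    Ioc_mem_nhdsGT_of_mem (by constructor <;> norm_num)
  -- Step A: pointwise comparison of the limsup-ands
  have stepA : ∀ᶠ ε in l, lhsf ε ≤ max (F1 ε) (F2 ε) := by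
    filter_upwards [hmem] with ε hε
    obtain ⟨hε0, hε1⟩ := hε
    have hεI : ε ∈ Ioi (0:ℝ) := hε0
    have hinv : 0 < ε⁻¹ := inv_pos.2 hε0
    have h1e : 1 ≤ ε⁻¹ := by
      have hme : ε * ε⁻¹ = 1 := mul_inv_cancel₀ hε0.ne'
      nlinarith
    have hinv1 : ε⁻¹ ≤ ε⁻¹^2 := by nlinarith [mul_nonneg hinv.le (sub_nonneg.2 h1e)]
    set c1 : ℝ := Real.exp (ε⁻¹ * (cA * (1 + L))) with hc1
    set c2 : ℝ := Real.exp (-((1 + L) * ε⁻¹ ^ 2)) with hc2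
    have hpt : ∀ η : Pth T d,
        ENNReal.ofReal (Real.exp (ε⁻¹ * A ε η + ε⁻¹ ^ 2 * R ε η)) ≤
          ENNReal.ofReal (c1 * Real.exp (ε⁻¹ ^ 2 * R ε η)) +
          ENNReal.ofReal (c2 * Real.exp ((cR + cA + 1) * ε⁻¹ ^ 2 * (1 + ‖η‖))) := by
      intro η
      have hAb := hA ε hεI η
      have hRb := hR ε hεI η
      have hAb' : A ε η ≤ cA * (1 + ‖η‖) := (le_abs_self _).trans hAb
      have hnn : (0:ℝ) ≤ ‖η‖ := norm_nonneg _
      rcases le_or_gt ‖η‖ L with hcase | hcase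
      · refine le_trans ?_ (self_le_add_right _ _)
        apply ENNReal.ofReal_le_ofReal
        rw [hc1, ← Real.exp_add]
        apply Real.exp_le_exp.2
        have h1 : A ε η ≤ cA * (1 + L) := hAb'.trans (by nlinarith)
        have := mul_le_mul_of_nonneg_left h1 hinv.le
        linarith
      · refine le_trans ?_ (self_le_add_left _ _)
        apply ENNReal.ofReal_le_ofReal
        rw [hc2, ← Real.exp_add]
        apply Real.exp_le_exp.2
        have t1 : ε⁻¹ * A ε η ≤ ε⁻¹ * (cA * (1 + ‖η‖)) :=
          mul_le_mul_of_nonneg_left hAb' hinv.le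
        have t2 : ε⁻¹ * (cA * (1 + ‖η‖)) ≤ ε⁻¹^2 * (cA * (1 + ‖η‖)) :=
          mul_le_mul_of_nonneg_right hinv1 (by positivity)
        have t3 : ε⁻¹^2 * (R ε η) ≤ ε⁻¹^2 * (cR * (1 + ‖η‖)) :=
          mul_le_mul_of_nonneg_left hRb (by positivity)
        have t4 : ε⁻¹^2 * (1 + L) ≤ ε⁻¹^2 * (1 + ‖η‖) :=
          mul_le_mul_of_nonneg_left (by linarith) (by positivity)
        nlinarith [t1, t2, t3, t4]
    have hmR : Measurable fun η : Pth T d => ENNReal.ofReal (Real.exp (ε⁻¹ ^ 2 * R ε η)) :=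
      (((hRmeas ε hεI).const_mul (ε⁻¹ ^ 2)).exp).ennreal_ofReal
    have hmG : Measurable fun η : Pth T d =>
        ENNReal.ofReal (Real.exp ((cR + cA + 1) * ε⁻¹ ^ 2 * (1 + ‖η‖))) :=
      (((measurable_norm.const_add 1).const_mul ((cR + cA + 1) * ε⁻¹ ^ 2)).exp).ennreal_ofReal
    set J := ∫⁻ η, ENNReal.ofReal (Real.exp (ε⁻¹ ^ 2 * R ε η)) ∂(μ ε) with hJ
    set G := ∫⁻ η, ENNReal.ofReal (Real.exp ((cR + cA + 1) * ε⁻¹ ^ 2 * (1 + ‖η‖))) ∂(μ ε) with hG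
    have hIle : (∫⁻ η, ENNReal.ofReal (Real.exp (ε⁻¹ * A ε η + ε⁻¹ ^ 2 * R ε η)) ∂(μ ε)) ≤
        max (ENNReal.ofReal (2*c1) * J) (ENNReal.ofReal (2*c2) * G) := by
      have step1 : (∫⁻ η, ENNReal.ofReal (Real.exp (ε⁻¹ * A ε η + ε⁻¹ ^ 2 * R ε η)) ∂(μ ε)) ≤
          ENNReal.ofReal c1 * J + ENNReal.ofReal c2 * G := by
        calc (∫⁻ η, ENNReal.ofReal (Real.exp (ε⁻¹ * A ε η + ε⁻¹ ^ 2 * R ε η)) ∂(μ ε))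
            ≤ ∫⁻ η, (ENNReal.ofReal (c1 * Real.exp (ε⁻¹ ^ 2 * R ε η)) +
              ENNReal.ofReal (c2 * Real.exp ((cR + cA + 1) * ε⁻¹ ^ 2 * (1 + ‖η‖)))) ∂(μ ε) :=
              lintegral_mono hpt
          _ = (∫⁻ η, ENNReal.ofReal (c1 * Real.exp (ε⁻¹ ^ 2 * R ε η)) ∂(μ ε)) +
              (∫⁻ η, ENNReal.ofReal (c2 * Real.exp ((cR + cA + 1) * ε⁻¹ ^ 2 * (1 + ‖η‖))) ∂(μ ε)) := by
              apply lintegral_add_left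
              exact (measurable_const.mul (((hRmeas ε hεI).const_mul (ε⁻¹ ^ 2)).exp)).ennreal_ofReal
          _ = ENNReal.ofReal c1 * J + ENNReal.ofReal c2 * G := by
              rw [hJ, hG]
              congr 1
              · simp_rw [ENNReal.ofReal_mul (show (0:ℝ) ≤ c1 from (Real.exp_pos _).le)]
                exact lintegral_const_mul _ hmR
              · simp_rw [ENNReal.ofReal_mul (show (0:ℝ) ≤ c2 from (Real.exp_pos _).le)]
                exact lintegral_const_mul _ hmG
      refine step1.trans ?_
      have key : ∀ a b : ℝ≥0∞, a + b ≤ max (2*a) (2*b) := by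
        intro a b
        rcases le_total a b with h | h
        · exact le_max_of_le_right (by rw [two_mul]; exact add_le_add_left h b)
        · exact le_max_of_le_left (by rw [two_mul]; exact add_le_add_right h a)
      refine (key _ _).trans ?_
      have e1 : ENNReal.ofReal (2*c1) * J = 2 * (ENNReal.ofReal c1 * J) := by
        rw [ENNReal.ofReal_mul (by norm_num : (0:ℝ) ≤ 2), ENNReal.ofReal_ofNat, mul_assoc]
      have e2 : ENNReal.ofReal (2*c2) * G = 2 * (ENNReal.ofReal c2 * G) := by
        rw [ENNReal.ofReal_mul (by norm_num : (0:ℝ) ≤ 2), ENNReal.ofReal_ofNat, mul_assoc]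
      rw [e1, e2]
    have hc1pos : (0:ℝ) < 2*c1 := by positivity
    have hc2pos : (0:ℝ) < 2*c2 := by positivity
    have hsq : (0:ℝ) < ε^2 := by positivity
    calc lhsf ε ≤ ((ε^2:ℝ):EReal) *
          ENNReal.log (max (ENNReal.ofReal (2*c1) * J) (ENNReal.ofReal (2*c2) * G)) := by
          exact mul_le_mul_of_nonneg_left (ENNReal.log_monotone hIle)
            (by exact_mod_cast hsq.le)
      _ = max (((ε^2:ℝ):EReal) * ENNReal.log (ENNReal.ofReal (2*c1) * J))
            (((ε^2:ℝ):EReal) * ENNReal.log (ENNReal.ofReal (2*c2) * G)) := by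
          rw [ENNReal.log_monotone.map_max, ereal_mul_max hsq.le]
      _ = max (F1 ε) (F2 ε) := by
          simp only [hF1, hF2]
          congr 1
          · rw [ENNReal.log_mul_add, ENNReal.log_ofReal_of_pos hc1pos,
              coe_mul_coe_add hsq]
          · rw [ENNReal.log_mul_add, ENNReal.log_ofReal_of_pos hc2pos,
              coe_mul_coe_add hsq]
  -- Step B : limsup F1 ≤ limsup rhsf
  have main1 : Filter.limsup F1 l ≤ Filter.limsup rhsf l := by
    refine ereal_le_of_forall_add fun δ hδ => ?_
    have hcont : Continuous fun ε : ℝ => Real.log 2 * ε^2 + cA*(1+L)*ε := by continuity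
    have hten : Tendsto (fun ε : ℝ => Real.log 2 * ε^2 + cA*(1+L)*ε) l (𝓝 0) := by
      have := hcont.tendsto 0
      simp only [mul_zero, add_zero, zero_pow, ne_eq, OfNat.ofNat_ne_zero,
        not_false_eq_true] at this
      exact this.mono_left nhdsWithin_le_nhds
    have hev0 : ∀ᶠ ε in l, Real.log 2 * ε^2 + cA*(1+L)*ε < δ :=
      hten.eventually_lt_const hδ
    have hev : ∀ᶠ ε in l, F1 ε ≤ (δ:EReal) + rhsf ε := by
      filter_upwards [hev0, self_mem_nhdsWithin] with ε hlt hpos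
      have hpos' : (0:ℝ) < ε := hpos
      have heq : ε^2 * Real.log (2 * Real.exp (ε⁻¹ * (cA * (1 + L)))) =
          Real.log 2 * ε^2 + cA*(1+L)*ε := by
        rw [Real.log_mul (by norm_num) (Real.exp_pos _).ne', Real.log_exp]
        field_simp
      simp only [hF1]
      rw [heq]
      exact add_le_add_left (by exact_mod_cast hlt.le) _
    calc Filter.limsup F1 l ≤ Filter.limsup (fun ε => (δ:EReal) + rhsf ε) l :=
          limsup_le_limsup hev
      _ ≤ (δ:EReal) + Filter.limsup rhsf l := limsup_const_add_le δ rhsf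
  -- Step C : limsup F2 ≤ -L + limsup Gf
  have main2 : Filter.limsup F2 l ≤ ((-L:ℝ):EReal) + Filter.limsup Gf l := by
    have hev : ∀ᶠ ε in l, F2 ε ≤ ((-L:ℝ):EReal) + Gf ε := by
      filter_upwards [hmem] with ε hε
      obtain ⟨hε0, hε1⟩ := hε
      have heq : ε^2 * Real.log (2 * Real.exp (-((1 + L) * ε⁻¹ ^ 2))) =
          Real.log 2 * ε^2 - (1+L) := by
        rw [Real.log_mul (by norm_num) (Real.exp_pos _).ne', Real.log_exp]
        field_simp
        ring
      have hle : Real.log 2 * ε^2 - (1+L) ≤ -L := by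
        have h2 : Real.log 2 ≤ 1 := by
          have := Real.log_le_sub_one_of_pos (by norm_num : (0:ℝ) < 2)
          linarith
        have h3 : (0:ℝ) ≤ Real.log 2 := Real.log_nonneg (by norm_num)
        nlinarith
      simp only [hF2]
      rw [heq]
      exact add_le_add_left (by exact_mod_cast hle) _
    calc Filter.limsup F2 l ≤ Filter.limsup (fun ε => ((-L:ℝ):EReal) + Gf ε) l :=
          limsup_le_limsup hev
      _ ≤ ((-L:ℝ):EReal) + Filter.limsup Gf l := limsup_const_add_le (-L) Gf
  calc Filter.limsup lhsf l ≤ Filter.limsup (fun ε => max (F1 ε) (F2 ε)) l :=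
        limsup_le_limsup stepA
    _ ≤ max (Filter.limsup rhsf l) (((-L:ℝ):EReal) + Filter.limsup Gf l) :=
        limsup_max_le' main1 main2


end
end

section
/- Let (μ^ε)_{ε>0} be finite Borel measures on C_d such that for every C ∈ (0,∞), limsup_{ε→0} ε² log ∫_{C_d} exp(C ε^{-2}(1+‖η‖_*)) μ^ε(dη) < ∞. Let c_A ∈ (0,∞) and for each ε > 0 let Ā^ε: C_d → ℝ be Borel measurable with |Ā^ε(η)| ≤ c_A(1+‖η‖_*) for all η ∈ C_d and all ε > 0. Then for every c₀ ∈ (0,∞), limsup_{M→∞} limsup_{ε→0} ε² log ∫_{{η : Ā^ε(η) ≥ M}} exp(ε^{-1} Ā^ε(η) + ε^{-2} c₀(1+‖η‖_*)) μ^ε(dη) = −∞. -/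
open MeasureTheory Set Filter Topology
open scoped ENNReal

noncomputable section

lemma aux_distrib (a r : ℝ) (ha : 0 < a) (x : EReal) :
    (a : EReal) * ((r:EReal) + x) = ((a*r : ℝ) : EReal) + (a:EReal) * x := by
  have ha' : (0:EReal) < (a:EReal) := by exact_mod_cast ha
  induction x with
  | bot => rw [EReal.add_bot, EReal.mul_bot_of_pos ha', EReal.add_bot]
  | coe x => norm_cast; ring
  | top => rw [EReal.add_top_of_ne_bot (EReal.coe_ne_bot _), EReal.mul_top_of_pos ha',
      EReal.add_top_of_ne_bot (EReal.coe_ne_bot _)]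

lemma aux_tendsto (c : ℝ) (hc : 0 < c) (L : EReal) (hL : L < ⊤) :
    Tendsto (fun M : ℝ => ((-(M/c) : ℝ) : EReal) + L) atTop (𝓝 ⊥) := by
  obtain ⟨l, hl, -⟩ := EReal.lt_iff_exists_real_btwn.mp hL
  rw [EReal.tendsto_nhds_bot_iff_real]
  intro x
  have h1 : Tendsto (fun M : ℝ => -(M/c) + l) atTop atBot := by
    apply tendsto_atBot_add_const_right
    exact tendsto_neg_atTop_atBot.comp (Tendsto.atTop_div_const hc tendsto_id)
  filter_upwards [h1.eventually (eventually_lt_atBot x)] with M hM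
  calc ((-(M/c):ℝ):EReal) + L ≤ ((-(M/c):ℝ):EReal) + (l:EReal) := add_le_add le_rfl hl.le
    _ = ((-(M/c) + l : ℝ) : EReal) := by norm_cast
    _ < x := by exact_mod_cast hM

/-- **Lemma 5.2, second part (inequality (5.cobd)).**
Under the exponential moment condition on `(μ^ε)`, for linear-growth functionals `Ā^ε`
and any `c₀ > 0`,
`limsup_{M→∞} limsup_{ε→0} ε² log ∫_{Ā^ε ≥ M} e^{ε⁻¹Ā^ε + ε⁻²c₀(1+‖·‖_*)} dμ^ε = −∞`. -/
theorem limsup_exp_restricted_to_large_A_neg_infty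
    {T : ℝ} (hT : 0 < T) {d : ℕ}
    [MeasurableSpace (Pth T d)] [BorelSpace (Pth T d)]
    (μ : ℝ → Measure (Pth T d)) (hfin : ∀ ε ∈ Ioi (0:ℝ), IsFiniteMeasure (μ ε))
    (hexp : ∀ C : ℝ, 0 < C →
      Filter.limsup
        (fun ε : ℝ => ((ε ^ 2 : ℝ) : EReal) *
          ENNReal.log (∫⁻ η, ENNReal.ofReal (Real.exp (C * ε⁻¹ ^ 2 * (1 + ‖η‖))) ∂(μ ε)))
        (𝓝[>] (0:ℝ)) < ⊤)
    (cA : ℝ) (hcA : 0 < cA)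
    (A : ℝ → Pth T d → ℝ)
    (hAmeas : ∀ ε ∈ Ioi (0:ℝ), Measurable (A ε))
    (hA : ∀ ε ∈ Ioi (0:ℝ), ∀ η : Pth T d, |A ε η| ≤ cA * (1 + ‖η‖))
    (c₀ : ℝ) (hc₀ : 0 < c₀) :
    Filter.limsup
      (fun M : ℝ =>
        Filter.limsup
          (fun ε : ℝ => ((ε ^ 2 : ℝ) : EReal) *
            ENNReal.log (∫⁻ η in {η : Pth T d | M ≤ A ε η},
              ENNReal.ofReal (Real.exp (ε⁻¹ * A ε η + ε⁻¹ ^ 2 * (c₀ * (1 + ‖η‖)))) ∂(μ ε)))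
          (𝓝[>] (0:ℝ)))
      Filter.atTop = (⊥ : EReal) := by
  set C : ℝ := cA + c₀ + 1 with hCdef
  have hC : 0 < C := by positivity
  set F : ℝ → EReal := fun ε : ℝ => ((ε ^ 2 : ℝ) : EReal) *
      ENNReal.log (∫⁻ η, ENNReal.ofReal (Real.exp (C * ε⁻¹ ^ 2 * (1 + ‖η‖))) ∂(μ ε)) with hFdef
  set L : EReal := Filter.limsup F (𝓝[>] (0:ℝ)) with hLdef
  have hL : L < ⊤ := hexp C hC
  -- Step A
  have stepA : ∀ M : ℝ,
      Filter.limsup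
        (fun ε : ℝ => ((ε ^ 2 : ℝ) : EReal) *
          ENNReal.log (∫⁻ η in {η : Pth T d | M ≤ A ε η},
            ENNReal.ofReal (Real.exp (ε⁻¹ * A ε η + ε⁻¹ ^ 2 * (c₀ * (1 + ‖η‖)))) ∂(μ ε)))
        (𝓝[>] (0:ℝ)) ≤ ((-(M/cA) : ℝ) : EReal) + L := by
    intro M
    have hev : ∀ᶠ ε in 𝓝[>] (0:ℝ),
        ((ε ^ 2 : ℝ) : EReal) *
          ENNReal.log (∫⁻ η in {η : Pth T d | M ≤ A ε η},
            ENNReal.ofReal (Real.exp (ε⁻¹ * A ε η + ε⁻¹ ^ 2 * (c₀ * (1 + ‖η‖)))) ∂(μ ε))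
          ≤ ((-(M/cA) : ℝ) : EReal) + F ε := by
      filter_upwards [Ioo_mem_nhdsGT_of_mem (by exact ⟨le_refl (0:ℝ), one_pos⟩ : (0:ℝ) ∈ Ico (0:ℝ) 1)]
        with ε hε
      obtain ⟨hε0, hε1⟩ := hε
      have hεmem : ε ∈ Ioi (0:ℝ) := hε0
      have hu0 : 0 < ε⁻¹ := inv_pos.mpr hε0
      have hu1 : 1 ≤ ε⁻¹ := (one_le_inv_iff₀).mpr ⟨hε0, hε1.le⟩
      have hg : Measurable (fun η : Pth T d => ENNReal.ofReal (Real.exp (C * ε⁻¹ ^ 2 * (1 + ‖η‖)))) := by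
        apply ENNReal.measurable_ofReal.comp
        exact (Real.continuous_exp.comp (by fun_prop)).measurable
      -- integral bound
      have hint : (∫⁻ η in {η : Pth T d | M ≤ A ε η},
            ENNReal.ofReal (Real.exp (ε⁻¹ * A ε η + ε⁻¹ ^ 2 * (c₀ * (1 + ‖η‖)))) ∂(μ ε))
          ≤ ENNReal.ofReal (Real.exp (-(ε⁻¹ ^ 2 * (M/cA)))) *
            ∫⁻ η, ENNReal.ofReal (Real.exp (C * ε⁻¹ ^ 2 * (1 + ‖η‖))) ∂(μ ε) := by
        calc (∫⁻ η in {η : Pth T d | M ≤ A ε η},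
            ENNReal.ofReal (Real.exp (ε⁻¹ * A ε η + ε⁻¹ ^ 2 * (c₀ * (1 + ‖η‖)))) ∂(μ ε))
            ≤ ∫⁻ η in {η : Pth T d | M ≤ A ε η},
              ENNReal.ofReal (Real.exp (-(ε⁻¹ ^ 2 * (M/cA)))) *
                ENNReal.ofReal (Real.exp (C * ε⁻¹ ^ 2 * (1 + ‖η‖))) ∂(μ ε) := by
              apply setLIntegral_mono (measurable_const.mul hg)
              intro η hη
              simp only [Pi.mul_apply]
              rw [← ENNReal.ofReal_mul (Real.exp_nonneg _), ← Real.exp_add]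
              apply ENNReal.ofReal_le_ofReal
              apply Real.exp_le_exp.mpr
              have hs : (1:ℝ) ≤ 1 + ‖η‖ := by
                have := norm_nonneg η; linarith
              have hAb : A ε η ≤ cA * (1 + ‖η‖) := (abs_le.mp (hA ε hεmem η)).2
              have hMs : M / cA ≤ 1 + ‖η‖ := by
                rw [div_le_iff₀ hcA]
                calc M ≤ A ε η := hη
                  _ ≤ cA * (1 + ‖η‖) := hAb
                  _ = (1 + ‖η‖) * cA := mul_comm _ _
              have hCs : C = cA + c₀ + 1 := hCdef
              nlinarith [mul_le_mul_of_nonneg_left hAb hu0.le, sq_nonneg ε⁻¹,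
                mul_le_mul_of_nonneg_left hMs (sq_nonneg ε⁻¹),
                mul_le_mul_of_nonneg_right (mul_le_mul_of_nonneg_left hu1 hu0.le)
                  (by nlinarith : (0:ℝ) ≤ cA * (1 + ‖η‖))]
          _ = ENNReal.ofReal (Real.exp (-(ε⁻¹ ^ 2 * (M/cA)))) *
              ∫⁻ η in {η : Pth T d | M ≤ A ε η},
                ENNReal.ofReal (Real.exp (C * ε⁻¹ ^ 2 * (1 + ‖η‖))) ∂(μ ε) :=
            lintegral_const_mul _ hg
          _ ≤ ENNReal.ofReal (Real.exp (-(ε⁻¹ ^ 2 * (M/cA)))) *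
              ∫⁻ η, ENNReal.ofReal (Real.exp (C * ε⁻¹ ^ 2 * (1 + ‖η‖))) ∂(μ ε) :=
            mul_le_mul_right (setLIntegral_le_lintegral _ _) _
      have hlog : ENNReal.log (∫⁻ η in {η : Pth T d | M ≤ A ε η},
            ENNReal.ofReal (Real.exp (ε⁻¹ * A ε η + ε⁻¹ ^ 2 * (c₀ * (1 + ‖η‖)))) ∂(μ ε))
          ≤ ((-(ε⁻¹ ^ 2 * (M/cA)) : ℝ) : EReal) +
            ENNReal.log (∫⁻ η, ENNReal.ofReal (Real.exp (C * ε⁻¹ ^ 2 * (1 + ‖η‖))) ∂(μ ε)) := by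
        refine le_trans (ENNReal.log_monotone hint) ?_
        rw [ENNReal.log_mul_add, ENNReal.log_ofReal_of_pos (Real.exp_pos _), Real.log_exp]
      have hpow : (0:ℝ) < ε ^ 2 := by positivity
      calc ((ε ^ 2 : ℝ) : EReal) *
            ENNReal.log (∫⁻ η in {η : Pth T d | M ≤ A ε η},
              ENNReal.ofReal (Real.exp (ε⁻¹ * A ε η + ε⁻¹ ^ 2 * (c₀ * (1 + ‖η‖)))) ∂(μ ε))
          ≤ ((ε ^ 2 : ℝ) : EReal) * (((-(ε⁻¹ ^ 2 * (M/cA)) : ℝ) : EReal) +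
              ENNReal.log (∫⁻ η, ENNReal.ofReal (Real.exp (C * ε⁻¹ ^ 2 * (1 + ‖η‖))) ∂(μ ε))) :=
            mul_le_mul_of_nonneg_left hlog (by exact_mod_cast hpow.le)
        _ = ((ε ^ 2 * -(ε⁻¹ ^ 2 * (M/cA)) : ℝ) : EReal) + F ε := by
            rw [aux_distrib _ _ hpow]
        _ = ((-(M/cA) : ℝ) : EReal) + F ε := by
            congr 2
            field_simp
    refine le_trans (limsup_le_limsup hev) ?_
    have h2 := EReal.limsup_add_le (u := fun _ : ℝ => ((-(M/cA) : ℝ) : EReal)) (v := F)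
      (f := 𝓝[>] (0:ℝ)) (.inl (by simp)) (.inl (by simp))
    simpa [Pi.add_def] using h2
  -- Step B
  have hB : Filter.limsup (fun M : ℝ => ((-(M/cA) : ℝ) : EReal) + L) atTop = ⊥ :=
    (aux_tendsto cA hcA L hL).limsup_eq
  exact le_bot_iff.mp (le_trans (limsup_le_limsup (Eventually.of_forall stepA)) hB.le)


end
end

section
/- Under Assumption A, let M ∈ (0,∞) and let (φ_n) be a sequence in L²_k with ∫₀ᵀ‖φ_n(s)‖² ds ≤ M for all n, converging weakly in L²_k to φ. Then ξ₀^{φ_n} → ξ₀^φ in C_d, i.e., sup_{0≤t≤T} ‖ξ₀^{φ_n}(t) − ξ₀^φ(t)‖ → 0 as n → ∞. -/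
open MeasureTheory Set Filter Topology
open scoped RealInnerProductSpace ENNReal NNReal

noncomputable section

/-- Extension of a path on `[0,T]` to all of `ℝ` by projection onto `[0,T]`. -/
def pext {T : ℝ} (hT : (0:ℝ) ≤ T) {p : ℕ} (η : Pth T p) : ℝ → EuclideanSpace ℝ (Fin p) :=
  fun s => η (Set.projIcc (0:ℝ) T hT s)

/-- Square integrability on `[0,T]`. -/
def L2on (T : ℝ) {p : ℕ} (f : ℝ → EuclideanSpace ℝ (Fin p)) : Prop :=
  MeasureTheory.MemLp f 2 (MeasureTheory.volume.restrict (Set.Icc (0:ℝ) T))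

/-- `η` solves `η(t) = x₀ + ∫₀ᵗ b(η(s)) ds + ∫₀ᵗ σ(η(s)) φ(s) ds` on `[0,T]`. -/
def IsSol {T : ℝ} (hT : 0 < T) {d k : ℕ} (x₀ : EuclideanSpace ℝ (Fin d))
    (b : EuclideanSpace ℝ (Fin d) → EuclideanSpace ℝ (Fin d))
    (σ : EuclideanSpace ℝ (Fin d) → (EuclideanSpace ℝ (Fin k) →L[ℝ] EuclideanSpace ℝ (Fin d)))
    (φ : ℝ → EuclideanSpace ℝ (Fin k)) (η : Pth T d) : Prop :=
  ∀ t : Set.Icc (0:ℝ) T,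
    η t = x₀ + (∫ s in Set.Icc (0:ℝ) (t:ℝ), b (pext hT.le η s))
        + (∫ s in Set.Icc (0:ℝ) (t:ℝ), σ (pext hT.le η s) (φ s))

-- continuity of pext
lemma pext_continuous {T : ℝ} (hT : (0:ℝ) ≤ T) {p : ℕ} (η : Pth T p) :
    Continuous (pext hT η) := η.continuous.comp (continuous_projIcc)

lemma pext_bound {T : ℝ} (hT : (0:ℝ) ≤ T) {p : ℕ} (η ζ : Pth T p) (s : ℝ) :
    ‖pext hT η s - pext hT ζ s‖ ≤ ‖η - ζ‖ := by
  have : pext hT η s - pext hT ζ s = (η - ζ) (Set.projIcc (0:ℝ) T hT s) := by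
    simp [pext]
  rw [this]
  exact ContinuousMap.norm_coe_le_norm _ _

-- measurability of s ↦ A s (w s)
lemma aesm_clm_apply {d k : ℕ} {μ : Measure ℝ}
    {A : ℝ → (EuclideanSpace ℝ (Fin k) →L[ℝ] EuclideanSpace ℝ (Fin d))} (hA : Continuous A)
    {w : ℝ → EuclideanSpace ℝ (Fin k)} (hw : AEStronglyMeasurable w μ) :
    AEStronglyMeasurable (fun s => A s (w s)) μ := by
  have := ContinuousLinearMap.aestronglyMeasurable_comp₂
    ((ContinuousLinearMap.apply ℝ (EuclideanSpace ℝ (Fin d))).flip) hA.aestronglyMeasurable hw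
  simpa using this

-- integrability of s ↦ A s (w s) given bound cσ on ‖A s‖
lemma integrable_clm_apply {d k : ℕ} {μ : Measure ℝ}
    {A : ℝ → (EuclideanSpace ℝ (Fin k) →L[ℝ] EuclideanSpace ℝ (Fin d))} (hA : Continuous A)
    {cσ : ℝ} (hbd : ∀ s, ‖A s‖ ≤ cσ)
    {w : ℝ → EuclideanSpace ℝ (Fin k)} (hw : Integrable w μ) :
    Integrable (fun s => A s (w s)) μ := by
  refine Integrable.mono' (hw.norm.const_mul cσ) (aesm_clm_apply hA hw.1) ?_
  refine Filter.Eventually.of_forall fun s => ?_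
  calc ‖A s (w s)‖ ≤ ‖A s‖ * ‖w s‖ := (A s).le_opNorm _
    _ ≤ cσ * ‖w s‖ := by
        have := hbd s
        have := norm_nonneg (w s)
        nlinarith

section
private lemma sqrt_mul_le_half (a bb : ℝ) (ha : 0 ≤ a) (hb : 0 ≤ bb) :
    Real.sqrt (a * bb) ≤ (a + bb) / 2 := by
  nlinarith [Real.sq_sqrt ha, Real.sq_sqrt hb, Real.sqrt_nonneg a, Real.sqrt_nonneg bb,
    sq_nonneg (Real.sqrt a - Real.sqrt bb), Real.sqrt_mul ha bb,
    Real.sqrt_nonneg (a * bb)]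

private lemma cs_integral {μ : Measure ℝ} [IsFiniteMeasure μ] {f g : ℝ → ℝ}
    (hf0 : 0 ≤ᵐ[μ] f) (hg0 : 0 ≤ᵐ[μ] g) (hf : MemLp f 2 μ) (hg : MemLp g 2 μ) :
    ∫ a, f a * g a ∂μ ≤ Real.sqrt (∫ a, f a ^ 2 ∂μ) * Real.sqrt (∫ a, g a ^ 2 ∂μ) := by
  have hconj : Real.HolderConjugate 2 2 := (Real.holderConjugate_iff_eq_conjExponent one_lt_two).2 (by norm_num)
  have h2 : (ENNReal.ofReal (2:ℝ)) = 2 := by simp [ENNReal.ofReal_ofNat]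
  have h := integral_mul_le_Lp_mul_Lq_of_nonneg hconj hf0 hg0 (by rwa [h2]) (by rwa [h2])
  have hr : ∀ x : ℝ, x ^ (2:ℝ) = x ^ 2 := fun x => by
    rw [show (2:ℝ) = ((2:ℕ):ℝ) by norm_num, Real.rpow_natCast]
  simp only [hr] at h
  calc ∫ a, f a * g a ∂μ ≤ (∫ a, f a ^ 2 ∂μ) ^ (1/(2:ℝ)) * (∫ a, g a ^ 2 ∂μ) ^ (1/(2:ℝ)) := h
    _ = _ := by rw [← Real.sqrt_eq_rpow, ← Real.sqrt_eq_rpow]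
end

private lemma gronwall_aux {T A C : ℝ} (hT : 0 ≤ T) (hA : 0 ≤ A) (hC : 0 ≤ C)
    {u : ℝ → ℝ} (hu : Continuous u) (hu0 : ∀ s, 0 ≤ u s)
    (key : ∀ t ∈ Icc (0:ℝ) T, u t ≤ A + C * ∫ s in Icc (0:ℝ) t, u s) :
    ∀ t ∈ Icc (0:ℝ) T, u t ≤ A * Real.exp (C * T) := by
  have huint : ∀ t : ℝ, IntegrableOn u (Icc (0:ℝ) t) volume := fun t => hu.integrableOn_Icc
  have hmono : ∀ t ∈ Icc (0:ℝ) T, (∫ s in Icc (0:ℝ) t, u s) ≤ ∫ s in Icc (0:ℝ) T, u s := by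
    intro t ht
    exact setIntegral_mono_set (huint T) (Filter.Eventually.of_forall hu0)
      (HasSubset.Subset.eventuallyLE (Icc_subset_Icc le_rfl ht.2))
  set V : ℝ := A + C * ∫ s in Icc (0:ℝ) T, u s with hVdef
  have hV : ∀ t ∈ Icc (0:ℝ) T, u t ≤ V := fun t ht =>
    (key t ht).trans (by
      have := hmono t ht
      nlinarith)
  have hV0 : 0 ≤ V := le_trans (hu0 0) (hV 0 ⟨le_rfl, hT⟩)
  -- iterated Gronwall bound
  have claim : ∀ N : ℕ, ∀ t ∈ Icc (0:ℝ) T,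
      u t ≤ A * (∑ j ∈ Finset.range (N+1), C^j * t^j / j.factorial)
        + V * (C^(N+1) * t^(N+1) / (N+1).factorial) := by
    intro N
    induction N with
    | zero =>
      intro t ht
      have h1 : (∫ s in Icc (0:ℝ) t, u s) ≤ ∫ s in Icc (0:ℝ) t, V := by
        refine setIntegral_mono_on (huint t) (integrableOn_const ?_) measurableSet_Icc ?_
        · rw [Real.volume_Icc]; exact ENNReal.ofReal_ne_top
        · intro s hs; exact hV s ⟨hs.1, hs.2.trans ht.2⟩
      have h2 : (∫ s in Icc (0:ℝ) t, (V:ℝ)) = t * V := by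
        simp [Real.volume_Icc, ht.1, ENNReal.toReal_ofReal, ht.1]
      have h3 : u t ≤ A + C * (t * V) := by nlinarith [key t ht, h1, h2.le, h2.ge]
      have h4 : A * (∑ j ∈ Finset.range (0+1), C^j * t^j / (j.factorial:ℝ))
          + V * (C^(0+1) * t^(0+1) / ((0+1).factorial:ℝ)) = A + C * (t * V) := by
        simp [Finset.sum_range_one, Nat.factorial]
        ring
      rw [h4]
      exact h3
    | succ N ih =>
      intro t ht
      set S : ℝ → ℝ := fun s => ∑ j ∈ Finset.range (N+1), C^j * s^j / j.factorial with hSdef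
      have hSc : Continuous S := by
        apply continuous_finset_sum
        intro j _
        have : (fun s : ℝ => C^j * s^j / (j.factorial:ℝ))
            = fun s : ℝ => (C^j / (j.factorial:ℝ)) * s^j := by funext s; ring
        rw [this]; exact continuous_const.mul (continuous_pow j)
      set Q : ℝ → ℝ := fun s => C^(N+1) * s^(N+1) / (N+1).factorial with hQdef
      have hQc : Continuous Q := by
        have : Q = fun s : ℝ => (C^(N+1) / ((N+1).factorial:ℝ)) * s^(N+1) := by
          funext s; simp only [hQdef]; ring
        rw [this]; exact continuous_const.mul (continuous_pow (N+1))
      have hPc : Continuous fun s => A * S s + V * Q s :=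
        (continuous_const.mul hSc).add (continuous_const.mul hQc)
      have hbnd : ∀ s ∈ Icc (0:ℝ) t, u s ≤ A * S s + V * Q s := fun s hs =>
        ih s ⟨hs.1, hs.2.trans ht.2⟩
      have h1 : (∫ s in Icc (0:ℝ) t, u s) ≤ ∫ s in Icc (0:ℝ) t, (A * S s + V * Q s) :=
        setIntegral_mono_on (huint t) (hPc.integrableOn_Icc) measurableSet_Icc hbnd
      -- compute the polynomial integral
      have h2 : (∫ s in Icc (0:ℝ) t, (A * S s + V * Q s))
          = A * (∑ j ∈ Finset.range (N+1), C^j * t^(j+1) / ((j+1) * j.factorial))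
            + V * (C^(N+1) * t^(N+2) / ((N+2) * (N+1).factorial)) := by
        rw [integral_Icc_eq_integral_Ioc, ← intervalIntegral.integral_of_le ht.1]
        rw [intervalIntegral.integral_add (f := fun s => A * S s) (g := fun s => V * Q s) ((continuous_const.mul hSc : Continuous fun s => A * S s).intervalIntegrable _ _)
          ((continuous_const.mul hQc : Continuous fun s => V * Q s).intervalIntegrable _ _)]
        congr 1
        · rw [intervalIntegral.integral_const_mul]
          congr 1
          simp only [hSdef]
          rw [intervalIntegral.integral_finset_sum
            (fun j _ => by
              have : (fun s : ℝ => C^j * s^j / (j.factorial:ℝ))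
                  = fun s : ℝ => (C^j / (j.factorial:ℝ)) * s^j := by funext s; ring
              rw [this]
              exact (continuous_const.mul (continuous_pow j)).intervalIntegrable _ _)]
          refine Finset.sum_congr rfl fun j _ => ?_
          have : (fun s : ℝ => C^j * s^j / (j.factorial : ℝ))
              = fun s : ℝ => (C^j / (j.factorial : ℝ)) * s^j := by
            funext s; ring
          rw [this, intervalIntegral.integral_const_mul, integral_pow,
            zero_pow (Nat.succ_ne_zero j), sub_zero, div_mul_div_comm,
            mul_comm ((j.factorial:ℝ)) _]
        · have : (fun s : ℝ => V * Q s)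
              = fun s : ℝ => (V * C^(N+1) / ((N+1).factorial : ℝ)) * s^(N+1) := by
            funext s; simp only [hQdef]; ring
          rw [this, intervalIntegral.integral_const_mul, integral_pow,
            zero_pow (Nat.succ_ne_zero _), sub_zero, div_mul_div_comm,
            mul_comm (((N+1).factorial:ℝ)) _]
          push_cast
          ring
      have hfin : u t ≤ A + C * (A * (∑ j ∈ Finset.range (N+1), C^j * t^(j+1) / ((j+1) * j.factorial))
            + V * (C^(N+1) * t^(N+2) / ((N+2) * (N+1).factorial))) := by
        have h12 := h1.trans_eq h2
        nlinarith [key t ht]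
      -- rearrange into the (N+1) claim
      refine hfin.trans (le_of_eq ?_)
      rw [Finset.sum_range_succ' (fun j => C^j * t^j / (j.factorial : ℝ)) (N+1)]
      have hsum : (∑ j ∈ Finset.range (N+1), C^(j+1) * t^(j+1) / ((j+1).factorial : ℝ))
          = C * (∑ j ∈ Finset.range (N+1), C^j * t^(j+1) / ((j+1) * j.factorial)) := by
        rw [Finset.mul_sum]
        refine Finset.sum_congr rfl fun j _ => ?_
        rw [Nat.factorial_succ]
        have hfac : ((j.factorial:ℝ)) ≠ 0 := Nat.cast_ne_zero.2 (Nat.factorial_ne_zero _)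
        have hj1 : ((j:ℝ)+1) ≠ 0 := by positivity
        push_cast
        field_simp
        ring
      have hlast : V * (C^(N+1+1) * t^(N+1+1) / ((N+1+1).factorial : ℝ))
          = C * (V * (C^(N+1) * t^(N+2) / ((N+2) * (N+1).factorial))) := by
        rw [Nat.factorial_succ]
        have hfac : (((N+1).factorial:ℝ)) ≠ 0 := Nat.cast_ne_zero.2 (Nat.factorial_ne_zero _)
        have hN2 : ((N:ℝ)+2) ≠ 0 := by positivity
        push_cast
        field_simp
        ring
      simp only [pow_zero, Nat.factorial_zero, Nat.cast_one, mul_one]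
      rw [mul_add A, hsum, hlast]
      ring
  -- pass to the limit
  intro t ht
  have hle : ∀ N : ℕ, u t ≤ A * Real.exp (C * T) + V * ((C*T)^(N+1) / ((N+1).factorial : ℝ)) := by
    intro N
    refine (claim N t ht).trans ?_
    have hCt : 0 ≤ C * t := mul_nonneg hC ht.1
    gcongr
    · calc (∑ j ∈ Finset.range (N+1), C^j * t^j / (j.factorial:ℝ))
          = ∑ j ∈ Finset.range (N+1), (C*t)^j / (j.factorial:ℝ) := by
            refine Finset.sum_congr rfl fun j _ => by rw [mul_pow]
        _ ≤ Real.exp (C * t) := Real.sum_le_exp_of_nonneg hCt _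
        _ ≤ Real.exp (C * T) := Real.exp_le_exp.2 (by nlinarith [ht.2])
    · rw [← mul_pow]
      gcongr
      exact ht.2
  have htend : Tendsto (fun N : ℕ => A * Real.exp (C * T) + V * ((C*T)^(N+1) / ((N+1).factorial : ℝ)))
      atTop (𝓝 (A * Real.exp (C * T) + V * 0)) := by
    refine Tendsto.const_add _ (Tendsto.const_mul _ ?_)
    exact (FloorSemiring.tendsto_pow_div_factorial_atTop (C*T)).comp (tendsto_add_atTop_nat 1)
  rw [mul_zero, add_zero] at htend
  exact ge_of_tendsto' htend hle


private lemma tendsto_zero_of_inner {d : ℕ} {x : ℕ → EuclideanSpace ℝ (Fin d)}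
    (h : ∀ y, Tendsto (fun n => ⟪x n, y⟫) atTop (𝓝 0)) :
    Tendsto x atTop (𝓝 0) := by
  set bb := EuclideanSpace.basisFun (Fin d) ℝ with hbb
  have hx : ∀ n, x n = ∑ i, ⟪bb i, x n⟫ • bb i := fun n => (bb.sum_repr' (x n)).symm
  have hsum : Tendsto (fun n => ∑ i : Fin d, ⟪bb i, x n⟫ • bb i) atTop (𝓝 0) := by
    have h0 : (0 : EuclideanSpace ℝ (Fin d)) = ∑ i : Fin d, (0:ℝ) • bb i := by simp
    rw [h0]
    refine tendsto_finset_sum _ fun i _ => ?_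
    have hi : Tendsto (fun n => ⟪bb i, x n⟫) atTop (𝓝 0) := by
      have := h (bb i)
      refine this.congr fun n => ?_
      exact real_inner_comm _ _
    simpa using hi.smul_const (bb i)
  exact hsum.congr fun n => (hx n).symm

private lemma R_pointwise {T : ℝ} (hT : 0 < T) {d k : ℕ}
    (σ : EuclideanSpace ℝ (Fin d) → (EuclideanSpace ℝ (Fin k) →L[ℝ] EuclideanSpace ℝ (Fin d)))
    (hσc : Continuous σ) (cσ : ℝ) (hσbd : ∀ x, ‖σ x‖ ≤ cσ)
    (ζ : Pth T d)
    (φn : ℕ → ℝ → EuclideanSpace ℝ (Fin k)) (φ : ℝ → EuclideanSpace ℝ (Fin k))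
    (hφnL2 : ∀ n, L2on T (φn n)) (hφL2 : L2on T φ)
    (hweak : ∀ f : ℝ → EuclideanSpace ℝ (Fin k), L2on T f →
      Tendsto (fun n => ∫ s in Set.Icc (0:ℝ) T, ⟪φn n s, f s⟫) atTop
        (𝓝 (∫ s in Set.Icc (0:ℝ) T, ⟪φ s, f s⟫)))
    (t : ℝ) (ht : t ∈ Icc (0:ℝ) T) :
    Tendsto (fun n => ∫ s in Icc (0:ℝ) t,
      (σ (pext hT.le ζ s) (φn n s) - σ (pext hT.le ζ s) (φ s))) atTop (𝓝 0) := by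
  set ζ' := pext hT.le ζ with hζ'def
  have hζc : Continuous ζ' := pext_continuous hT.le ζ
  have hAc : Continuous fun s => σ (ζ' s) := hσc.comp hζc
  haveI : IsFiniteMeasure (volume.restrict (Icc (0:ℝ) T)) := by infer_instance
  have hφnint : ∀ n, IntegrableOn (φn n) (Icc (0:ℝ) T) volume := fun n =>
    (hφnL2 n).integrable one_le_two
  have hφint : IntegrableOn φ (Icc (0:ℝ) T) volume := hφL2.integrable one_le_two
  have hsub : Icc (0:ℝ) t ⊆ Icc (0:ℝ) T := Icc_subset_Icc le_rfl ht.2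
  have hintn : ∀ n, IntegrableOn (fun s => σ (ζ' s) (φn n s)) (Icc 0 t) volume := fun n =>
    integrable_clm_apply hAc (fun s => hσbd _) ((hφnint n).mono_set hsub)
  have hintφ : IntegrableOn (fun s => σ (ζ' s) (φ s)) (Icc 0 t) volume :=
    integrable_clm_apply hAc (fun s => hσbd _) (hφint.mono_set hsub)
  apply tendsto_zero_of_inner
  intro y
  set g : ℝ → EuclideanSpace ℝ (Fin k) :=
    fun s => ContinuousLinearMap.adjoint (σ (ζ' s)) y with hgdef
  have hgc : Continuous g := by
    have h1 : Continuous fun s => ContinuousLinearMap.adjoint (σ (ζ' s)) :=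
      ContinuousLinearMap.adjoint.continuous.comp hAc
    exact (ContinuousLinearMap.apply ℝ (EuclideanSpace ℝ (Fin k)) y).continuous.comp h1
  set f : ℝ → EuclideanSpace ℝ (Fin k) := (Icc (0:ℝ) t).indicator g with hfdef
  have hgbd : ∀ s, ‖g s‖ ≤ cσ * ‖y‖ := by
    intro s
    calc ‖ContinuousLinearMap.adjoint (σ (ζ' s)) y‖
        ≤ ‖ContinuousLinearMap.adjoint (σ (ζ' s))‖ * ‖y‖ :=
          (ContinuousLinearMap.adjoint (σ (ζ' s))).le_opNorm y
      _ = ‖σ (ζ' s)‖ * ‖y‖ := by rw [ContinuousLinearMap.adjoint.norm_map]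
      _ ≤ cσ * ‖y‖ := mul_le_mul_of_nonneg_right (hσbd _) (norm_nonneg _)
  have hfL2 : L2on T f := by
    refine MemLp.of_bound (hgc.aestronglyMeasurable.indicator measurableSet_Icc) (cσ * ‖y‖)
      (Filter.Eventually.of_forall fun s => ?_)
    calc ‖f s‖ ≤ ‖g s‖ := norm_indicator_le_norm_self g s
      _ ≤ cσ * ‖y‖ := hgbd s
  -- key identity
  have hkey : ∀ w : ℝ → EuclideanSpace ℝ (Fin k),
      IntegrableOn (fun s => σ (ζ' s) (w s)) (Icc 0 t) volume →
      ⟪∫ s in Icc (0:ℝ) t, σ (ζ' s) (w s), y⟫ = ∫ s in Icc (0:ℝ) T, ⟪w s, f s⟫ := by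
    intro w hwint
    have h1 : ⟪y, ∫ s in Icc (0:ℝ) t, σ (ζ' s) (w s)⟫
        = ∫ s in Icc (0:ℝ) t, ⟪y, σ (ζ' s) (w s)⟫ := (integral_inner hwint y).symm
    have h2 : ∀ s, ⟪y, σ (ζ' s) (w s)⟫ = ⟪w s, g s⟫ := by
      intro s
      rw [real_inner_comm]
      exact (ContinuousLinearMap.adjoint_inner_right (σ (ζ' s)) (w s) y).symm
    have h3 : ∀ s, ⟪w s, f s⟫ = (Icc (0:ℝ) t).indicator (fun s' => ⟪w s', g s'⟫) s := by
      intro s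
      by_cases hs : s ∈ Icc (0:ℝ) t
      · rw [hfdef, Set.indicator_of_mem hs, Set.indicator_of_mem hs]
      · rw [hfdef, Set.indicator_of_notMem hs, Set.indicator_of_notMem hs, inner_zero_right]
    calc ⟪∫ s in Icc (0:ℝ) t, σ (ζ' s) (w s), y⟫
        = ⟪y, ∫ s in Icc (0:ℝ) t, σ (ζ' s) (w s)⟫ := real_inner_comm _ _
      _ = ∫ s in Icc (0:ℝ) t, ⟪y, σ (ζ' s) (w s)⟫ := h1
      _ = ∫ s in Icc (0:ℝ) t, ⟪w s, g s⟫ := by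
          refine integral_congr_ae (Filter.Eventually.of_forall fun s => h2 s)
      _ = ∫ s in Icc (0:ℝ) T, (Icc (0:ℝ) t).indicator (fun s' => ⟪w s', g s'⟫) s := by
          rw [setIntegral_indicator measurableSet_Icc,
            Set.inter_eq_self_of_subset_right hsub]
      _ = ∫ s in Icc (0:ℝ) T, ⟪w s, f s⟫ := by
          refine integral_congr_ae (Filter.Eventually.of_forall fun s => (h3 s).symm)
  have hrw : ∀ n, ⟪∫ s in Icc (0:ℝ) t, (σ (ζ' s) (φn n s) - σ (ζ' s) (φ s)), y⟫
      = (∫ s in Icc (0:ℝ) T, ⟪φn n s, f s⟫) - ∫ s in Icc (0:ℝ) T, ⟪φ s, f s⟫ := by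
    intro n
    rw [integral_sub (hintn n) hintφ, inner_sub_left, hkey (φn n) (hintn n), hkey φ hintφ]
  have := (hweak f hfL2).sub (tendsto_const_nhds
    (x := ∫ s in Icc (0:ℝ) T, ⟪φ s, f s⟫) (f := atTop))
  rw [sub_self] at this
  exact this.congr fun n => (hrw n).symm

private lemma holder_piece {T : ℝ} {k : ℕ}
    (w : ℝ → EuclideanSpace ℝ (Fin k)) (hw : L2on T w) (W : ℝ)
    (hWbd : (∫ s in Icc (0:ℝ) T, ‖w s‖^2) ≤ W)
    (t' t : ℝ) (h0 : 0 ≤ t') (ht't : t' ≤ t) (htT : t ≤ T) :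
    (∫ s in Ioc t' t, ‖w s‖) ≤ Real.sqrt W * Real.sqrt (t - t') := by
  haveI : IsFiniteMeasure (volume.restrict (Icc (0:ℝ) T)) := by infer_instance
  haveI : IsFiniteMeasure (volume.restrict (Ioc t' t)) := by infer_instance
  have hsub : Ioc t' t ⊆ Icc (0:ℝ) T := fun s hs => ⟨h0.trans hs.1.le, hs.2.trans htT⟩
  have hwm : MemLp (fun s => ‖w s‖) 2 (volume.restrict (Ioc t' t)) :=
    (hw.mono_measure (Measure.restrict_mono hsub le_rfl)).norm
  have hcs := cs_integral (μ := volume.restrict (Ioc t' t))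
    (f := fun s => ‖w s‖) (g := fun _ => (1:ℝ))
    (Filter.Eventually.of_forall fun s => norm_nonneg _)
    (Filter.Eventually.of_forall fun s => zero_le_one)
    hwm (memLp_const 1)
  have h1 : (∫ s in Ioc t' t, ‖w s‖ * 1) = ∫ s in Ioc t' t, ‖w s‖ := by
    simp
  have h2 : (∫ _ in Ioc t' t, (1:ℝ)^2) = t - t' := by
    simp [Real.volume_Ioc, ENNReal.toReal_ofReal (sub_nonneg.2 ht't), ht't]
  have h3 : (∫ s in Ioc t' t, ‖w s‖^2) ≤ W := by
    refine le_trans ?_ hWbd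
    refine setIntegral_mono_set hw.norm.integrable_sq
      (Filter.Eventually.of_forall fun s => by positivity)
      (HasSubset.Subset.eventuallyLE hsub)
  rw [h1, h2] at hcs
  calc (∫ s in Ioc t' t, ‖w s‖) ≤ Real.sqrt (∫ s in Ioc t' t, ‖w s‖^2) * Real.sqrt (t - t') := hcs
    _ ≤ Real.sqrt W * Real.sqrt (t - t') :=
        mul_le_mul_of_nonneg_right (Real.sqrt_le_sqrt h3) (Real.sqrt_nonneg _)

private lemma R_holder {T : ℝ} (hT : 0 < T) {d k : ℕ}
    (σ : EuclideanSpace ℝ (Fin d) → (EuclideanSpace ℝ (Fin k) →L[ℝ] EuclideanSpace ℝ (Fin d)))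
    (hσc : Continuous σ) (cσ : ℝ) (hσbd : ∀ x, ‖σ x‖ ≤ cσ)
    (ζ : Pth T d)
    (ψ φ : ℝ → EuclideanSpace ℝ (Fin k)) (hψL2 : L2on T ψ) (hφL2 : L2on T φ)
    (Wψ Wφ : ℝ) (hψbd : (∫ s in Icc (0:ℝ) T, ‖ψ s‖^2) ≤ Wψ)
    (hφbd : (∫ s in Icc (0:ℝ) T, ‖φ s‖^2) ≤ Wφ)
    (t' t : ℝ) (h0 : 0 ≤ t') (ht't : t' ≤ t) (htT : t ≤ T) :
    ‖(∫ s in Icc (0:ℝ) t, (σ (pext hT.le ζ s) (ψ s) - σ (pext hT.le ζ s) (φ s)))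
      - ∫ s in Icc (0:ℝ) t', (σ (pext hT.le ζ s) (ψ s) - σ (pext hT.le ζ s) (φ s))‖
      ≤ cσ * (Real.sqrt Wψ + Real.sqrt Wφ) * Real.sqrt (t - t') := by
  set ζ' := pext hT.le ζ with hζ'def
  have hζc : Continuous ζ' := pext_continuous hT.le ζ
  have hAc : Continuous fun s => σ (ζ' s) := hσc.comp hζc
  have hcσ0 : 0 ≤ cσ := le_trans (norm_nonneg _) (hσbd (ζ' 0))
  haveI : IsFiniteMeasure (volume.restrict (Icc (0:ℝ) T)) := by infer_instance
  have hψint : IntegrableOn ψ (Icc (0:ℝ) T) volume := hψL2.integrable one_le_two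
  have hφint : IntegrableOn φ (Icc (0:ℝ) T) volume := hφL2.integrable one_le_two
  set F : ℝ → EuclideanSpace ℝ (Fin d) := fun s => σ (ζ' s) (ψ s) - σ (ζ' s) (φ s) with hFdef
  have hFintT : IntegrableOn F (Icc (0:ℝ) T) volume :=
    (integrable_clm_apply hAc (fun s => hσbd _) hψint).sub
      (integrable_clm_apply hAc (fun s => hσbd _) hφint)
  have hsubt : Icc (0:ℝ) t ⊆ Icc (0:ℝ) T := Icc_subset_Icc le_rfl htT
  have hsubIoc : Ioc t' t ⊆ Icc (0:ℝ) T := fun s hs => ⟨h0.trans hs.1.le, hs.2.trans htT⟩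
  have hdisj : Disjoint (Icc (0:ℝ) t') (Ioc t' t) := by
    rw [Set.disjoint_left]
    rintro x hx1 hx2
    exact absurd hx1.2 (not_le.2 hx2.1)
  have hsplit : (∫ s in Icc (0:ℝ) t, F s)
      = (∫ s in Icc (0:ℝ) t', F s) + ∫ s in Ioc t' t, F s := by
    rw [← Icc_union_Ioc_eq_Icc h0 ht't]
    exact setIntegral_union hdisj measurableSet_Ioc
      (hFintT.mono_set (Icc_subset_Icc le_rfl (ht't.trans htT)))
      (hFintT.mono_set hsubIoc)
  have hptw : ∀ s, ‖F s‖ ≤ cσ * (‖ψ s‖ + ‖φ s‖) := by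
    intro s
    have h1 : F s = σ (ζ' s) (ψ s - φ s) := by rw [hFdef]; simp [map_sub]
    rw [h1]
    calc ‖σ (ζ' s) (ψ s - φ s)‖ ≤ ‖σ (ζ' s)‖ * ‖ψ s - φ s‖ := (σ (ζ' s)).le_opNorm _
      _ ≤ cσ * (‖ψ s‖ + ‖φ s‖) := by
          have h2 := norm_sub_le (ψ s) (φ s)
          have h3 := hσbd (ζ' s)
          have h4 := norm_nonneg (ψ s - φ s)
          nlinarith [norm_nonneg (σ (ζ' s))]
  have hbint : IntegrableOn (fun s => cσ * (‖ψ s‖ + ‖φ s‖)) (Ioc t' t) volume :=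
    IntegrableOn.mono_set ((hψint.norm.add hφint.norm).const_mul cσ) hsubIoc
  calc ‖(∫ s in Icc (0:ℝ) t, F s) - ∫ s in Icc (0:ℝ) t', F s‖
      = ‖∫ s in Ioc t' t, F s‖ := by rw [hsplit]; congr 1; abel
    _ ≤ ∫ s in Ioc t' t, ‖F s‖ := norm_integral_le_integral_norm _
    _ ≤ ∫ s in Ioc t' t, cσ * (‖ψ s‖ + ‖φ s‖) := by
        refine setIntegral_mono_on ((hFintT.mono_set hsubIoc).norm) hbint
          measurableSet_Ioc fun s _ => hptw s
    _ = cσ * ((∫ s in Ioc t' t, ‖ψ s‖) + ∫ s in Ioc t' t, ‖φ s‖) := by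
        rw [integral_const_mul, integral_add (IntegrableOn.mono_set hψint.norm hsubIoc)
          (IntegrableOn.mono_set hφint.norm hsubIoc)]
    _ ≤ cσ * (Real.sqrt Wψ * Real.sqrt (t - t') + Real.sqrt Wφ * Real.sqrt (t - t')) := by
        have hp1 := holder_piece ψ hψL2 Wψ hψbd t' t h0 ht't htT
        have hp2 := holder_piece φ hφL2 Wφ hφbd t' t h0 ht't htT
        have := mul_le_mul_of_nonneg_left (add_le_add hp1 hp2) hcσ0
        exact this
    _ = cσ * (Real.sqrt Wψ + Real.sqrt Wφ) * Real.sqrt (t - t') := by ring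

private lemma R_uniform {T : ℝ} (hT : 0 < T) {d k : ℕ}
    (σ : EuclideanSpace ℝ (Fin d) → (EuclideanSpace ℝ (Fin k) →L[ℝ] EuclideanSpace ℝ (Fin d)))
    (hσc : Continuous σ) (cσ : ℝ) (hσbd : ∀ x, ‖σ x‖ ≤ cσ)
    (ζ : Pth T d)
    (φn : ℕ → ℝ → EuclideanSpace ℝ (Fin k)) (φ : ℝ → EuclideanSpace ℝ (Fin k))
    (hφnL2 : ∀ n, L2on T (φn n)) (hφL2 : L2on T φ)
    (M : ℝ) (hφbd : ∀ n, (∫ s in Icc (0:ℝ) T, ‖φn n s‖ ^ 2) ≤ M)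
    (hweak : ∀ f : ℝ → EuclideanSpace ℝ (Fin k), L2on T f →
      Tendsto (fun n => ∫ s in Set.Icc (0:ℝ) T, ⟪φn n s, f s⟫) atTop
        (𝓝 (∫ s in Set.Icc (0:ℝ) T, ⟪φ s, f s⟫)))
    (ε : ℝ) (hε : 0 < ε) :
    ∀ᶠ n in atTop, ∀ t ∈ Icc (0:ℝ) T,
      ‖∫ s in Icc (0:ℝ) t, (σ (pext hT.le ζ s) (φn n s) - σ (pext hT.le ζ s) (φ s))‖ ≤ ε := by
  have hcσ0 : 0 ≤ cσ := le_trans (norm_nonneg _) (hσbd (pext hT.le ζ 0))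
  set Φ : ℝ := ∫ s in Icc (0:ℝ) T, ‖φ s‖ ^ 2 with hΦdef
  set H : ℝ := cσ * (Real.sqrt M + Real.sqrt Φ) with hHdef
  have hH0 : 0 ≤ H := by positivity
  have hH1 : 0 < H + 1 := by linarith
  set δ : ℝ := (ε / (2*(H+1)))^2 with hδdef
  have hδ0 : 0 < δ := by positivity
  have hδsq : Real.sqrt δ = ε / (2*(H+1)) := by
    rw [hδdef]
    exact Real.sqrt_sq (by positivity)
  clear_value Φ H δ
  set K : ℕ := ⌈T/δ⌉₊ with hKdef
  have hK0 : 0 < K := Nat.ceil_pos.2 (by positivity)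
  have hKpos : (0:ℝ) < K := Nat.cast_pos.2 hK0
  set step : ℝ := T / K with hstepdef
  have hstep0 : 0 < step := div_pos hT hKpos
  have hstepδ : step ≤ δ := by
    have h1 : T/δ ≤ (K:ℝ) := Nat.le_ceil _
    have h2 : T ≤ (K:ℝ) * δ := by
      rw [div_le_iff₀ hδ0] at h1
      linarith
    rw [hstepdef, div_le_iff₀ hKpos]
    linarith [mul_comm (K:ℝ) δ]
  have hKstep : (K:ℝ) * step = T := by
    rw [hstepdef]
    field_simp
  have hgrid : ∀ i ∈ Finset.range (K+1), (i:ℝ) * step ∈ Icc (0:ℝ) T := by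
    intro i hi
    have hiK : (i:ℝ) ≤ K := Nat.cast_le.2 (Nat.lt_succ_iff.1 (Finset.mem_range.1 hi))
    constructor
    · positivity
    · calc (i:ℝ) * step ≤ (K:ℝ) * step := by nlinarith
        _ = T := hKstep
  have h_ev : ∀ᶠ n in atTop, ∀ i ∈ Finset.range (K+1),
      ‖∫ s in Icc (0:ℝ) ((i:ℝ)*step),
        (σ (pext hT.le ζ s) (φn n s) - σ (pext hT.le ζ s) (φ s))‖ < ε/2 := by
    rw [eventually_all_finset]
    intro i hi
    have hpt := R_pointwise hT σ hσc cσ hσbd ζ φn φ hφnL2 hφL2 hweak ((i:ℝ)*step) (hgrid i hi)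
    have hn : Tendsto (fun n => ‖∫ s in Icc (0:ℝ) ((i:ℝ)*step),
        (σ (pext hT.le ζ s) (φn n s) - σ (pext hT.le ζ s) (φ s))‖) atTop (𝓝 0) := by
      have := hpt.norm
      simpa using this
    exact hn.eventually_lt_const (half_pos hε)
  filter_upwards [h_ev] with n hn
  intro t ht
  set i : ℕ := ⌊t/step⌋₊ with hidef
  have hts0 : 0 ≤ t / step := div_nonneg ht.1 hstep0.le
  have hi1 : (i:ℝ) ≤ t/step := Nat.floor_le hts0
  have hgl' : (i:ℝ) * step ≤ t := by
    calc (i:ℝ) * step ≤ (t/step) * step := by nlinarith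
      _ = t := by field_simp
  have hi2 : t/step < (i:ℝ) + 1 := Nat.lt_floor_add_one _
  have htlt : t - (i:ℝ)*step ≤ δ := by
    have : t < ((i:ℝ)+1) * step := by
      rw [div_lt_iff₀ hstep0] at hi2
      linarith
    nlinarith
  have hiK : i ≤ K := by
    have h1 : t/step ≤ (K:ℝ) := by
      rw [div_le_iff₀ hstep0]
      rw [mul_comm]
      linarith [hKstep, ht.2]
    have := Nat.floor_le_floor h1
    rwa [Nat.floor_natCast] at this
  have himem : i ∈ Finset.range (K+1) := Finset.mem_range.2 (Nat.lt_succ_of_le hiK)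
  have hRi := hn i himem
  have hΦbd : (∫ s in Icc (0:ℝ) T, ‖φ s‖ ^ 2) ≤ Φ := le_of_eq hΦdef.symm
  have hhold := R_holder hT σ hσc cσ hσbd ζ (φn n) φ (hφnL2 n) hφL2 M Φ (hφbd n) hΦbd
    ((i:ℝ)*step) t (by positivity) hgl' ht.2
  have hHδ : H * Real.sqrt (t - (i:ℝ)*step) ≤ ε/2 := by
    have h1 : Real.sqrt (t - (i:ℝ)*step) ≤ Real.sqrt δ := Real.sqrt_le_sqrt htlt
    have h2 : H * Real.sqrt (t - (i:ℝ)*step) ≤ H * (ε / (2*(H+1))) := by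
      rw [← hδsq]
      exact mul_le_mul_of_nonneg_left h1 hH0
    have h5 : H * (ε / (2*(H+1))) ≤ ε/2 := by
      have hq : (ε / (2*(H+1))) * (2*(H+1)) = ε := div_mul_cancel₀ _ (by linarith)
      have hq0 : 0 ≤ ε / (2*(H+1)) := div_nonneg hε.le (by linarith)
      nlinarith [hq, hq0, hH0, mul_nonneg hq0 hH0]
    linarith
  set Rt := ∫ s in Icc (0:ℝ) t, (σ (pext hT.le ζ s) (φn n s) - σ (pext hT.le ζ s) (φ s)) with hRt
  set Ri := ∫ s in Icc (0:ℝ) ((i:ℝ)*step),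
    (σ (pext hT.le ζ s) (φn n s) - σ (pext hT.le ζ s) (φ s)) with hRidef
  calc ‖Rt‖ = ‖(Rt - Ri) + Ri‖ := by rw [sub_add_cancel]
    _ ≤ ‖Rt - Ri‖ + ‖Ri‖ := norm_add_le _ _
    _ ≤ H * Real.sqrt (t - (i:ℝ)*step) + ε/2 := by
        refine add_le_add ?_ hRi.le
        rw [hHdef]
        exact hhold
    _ ≤ ε/2 + ε/2 := by linarith
    _ = ε := by ring


section master
variable {T : ℝ} (hT : 0 < T) {d k : ℕ}
  (x₀ : EuclideanSpace ℝ (Fin d))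
  (b : EuclideanSpace ℝ (Fin d) → EuclideanSpace ℝ (Fin d))
  (σ : EuclideanSpace ℝ (Fin d) → (EuclideanSpace ℝ (Fin k) →L[ℝ] EuclideanSpace ℝ (Fin d)))

private lemma master_estimate
    (clip : ℝ≥0) (hb : LipschitzWith clip b) (hσ : LipschitzWith clip σ)
    (cσ : ℝ) (hσbd : ∀ x, ‖σ x‖ ≤ cσ)
    (M : ℝ) (hM : 0 < M)
    (ψ φ : ℝ → EuclideanSpace ℝ (Fin k)) (hψL2 : L2on T ψ) (hφL2 : L2on T φ)
    (hψbd : (∫ s in Set.Icc (0:ℝ) T, ‖ψ s‖ ^ 2) ≤ M)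
    (η ζ : Pth T d) (hη : IsSol hT x₀ b σ ψ η) (hζ : IsSol hT x₀ b σ φ ζ)
    (Rb : ℝ) (hRb0 : 0 ≤ Rb)
    (hRb : ∀ t ∈ Icc (0:ℝ) T,
      ‖∫ s in Icc (0:ℝ) t, (σ (pext hT.le ζ s) (ψ s) - σ (pext hT.le ζ s) (φ s))‖ ≤ Rb) :
    ∀ t ∈ Icc (0:ℝ) T, ‖pext hT.le η t - pext hT.le ζ t‖
      ≤ (2*Rb) * Real.exp ((2*(clip:ℝ) + (clip:ℝ)^2*M)*T) := by
  set L : ℝ := (clip : ℝ) with hLdef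
  have hL0 : 0 ≤ L := clip.coe_nonneg
  set η' := pext hT.le η with hη'def
  set ζ' := pext hT.le ζ with hζ'def
  have hηc : Continuous η' := pext_continuous hT.le η
  have hζc : Continuous ζ' := pext_continuous hT.le ζ
  set D : ℝ → ℝ := fun s => ‖η' s - ζ' s‖ with hDdef
  have hDc : Continuous D := (hηc.sub hζc).norm
  have hD0 : ∀ s, 0 ≤ D s := fun s => norm_nonneg _
  have hDbd : ∀ s, D s ≤ ‖η - ζ‖ := fun s => pext_bound hT.le η ζ s
  -- integrability facts
  have hfin : ∀ t : ℝ, IsFiniteMeasure (volume.restrict (Icc (0:ℝ) t)) := fun t => by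
    infer_instance
  have hψint : IntegrableOn ψ (Icc (0:ℝ) T) volume := by
    haveI := hfin T
    exact hψL2.integrable one_le_two
  have hφint : IntegrableOn φ (Icc (0:ℝ) T) volume := by
    haveI := hfin T
    exact hφL2.integrable one_le_two
  have hσηc : Continuous fun s => σ (η' s) := hσ.continuous.comp hηc
  have hσζc : Continuous fun s => σ (ζ' s) := hσ.continuous.comp hζc
  -- the three integrable integrands, on Icc 0 t for t ≤ T
  have hint1 : ∀ t ∈ Icc (0:ℝ) T, IntegrableOn (fun s => b (η' s) - b (ζ' s)) (Icc 0 t) volume :=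
    fun t _ => ((hb.continuous.comp hηc).sub (hb.continuous.comp hζc)).integrableOn_Icc
  have hintσηψ : ∀ t ∈ Icc (0:ℝ) T, IntegrableOn (fun s => σ (η' s) (ψ s)) (Icc 0 t) volume :=
    fun t ht => integrable_clm_apply hσηc (fun s => hσbd _)
      (hψint.mono_set (Icc_subset_Icc le_rfl ht.2))
  have hintσζψ : ∀ t ∈ Icc (0:ℝ) T, IntegrableOn (fun s => σ (ζ' s) (ψ s)) (Icc 0 t) volume :=
    fun t ht => integrable_clm_apply hσζc (fun s => hσbd _)
      (hψint.mono_set (Icc_subset_Icc le_rfl ht.2))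
  have hintσζφ : ∀ t ∈ Icc (0:ℝ) T, IntegrableOn (fun s => σ (ζ' s) (φ s)) (Icc 0 t) volume :=
    fun t ht => integrable_clm_apply hσζc (fun s => hσbd _)
      (hφint.mono_set (Icc_subset_Icc le_rfl ht.2))
  -- the basic identity
  have hiden : ∀ t (ht : t ∈ Icc (0:ℝ) T), η' t - ζ' t
      = (∫ s in Icc (0:ℝ) t, (b (η' s) - b (ζ' s)))
        + ((∫ s in Icc (0:ℝ) t, ((σ (η' s) - σ (ζ' s)) (ψ s)))
          + (∫ s in Icc (0:ℝ) t, (σ (ζ' s) (ψ s) - σ (ζ' s) (φ s)))) := by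
    intro t ht
    have hproj : Set.projIcc (0:ℝ) T hT.le t = ⟨t, ht⟩ := Set.projIcc_of_mem hT.le ht
    have hη'' : η' t = x₀ + (∫ s in Icc (0:ℝ) t, b (η' s))
        + (∫ s in Icc (0:ℝ) t, σ (η' s) (ψ s)) := by
      rw [hη'def, pext, hproj]
      exact hη ⟨t, ht⟩
    have hζ'' : ζ' t = x₀ + (∫ s in Icc (0:ℝ) t, b (ζ' s))
        + (∫ s in Icc (0:ℝ) t, σ (ζ' s) (φ s)) := by
      rw [hζ'def, pext, hproj]
      exact hζ ⟨t, ht⟩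
    have e1 : (∫ s in Icc (0:ℝ) t, (b (η' s) - b (ζ' s)))
        = (∫ s in Icc (0:ℝ) t, b (η' s)) - (∫ s in Icc (0:ℝ) t, b (ζ' s)) :=
      integral_sub ((hb.continuous.comp hηc).integrableOn_Icc)
        ((hb.continuous.comp hζc).integrableOn_Icc)
    have e2 : (∫ s in Icc (0:ℝ) t, ((σ (η' s) - σ (ζ' s)) (ψ s)))
        = (∫ s in Icc (0:ℝ) t, σ (η' s) (ψ s)) - (∫ s in Icc (0:ℝ) t, σ (ζ' s) (ψ s)) := by
      rw [← integral_sub (hintσηψ t ht) (hintσζψ t ht)]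
      simp [ContinuousLinearMap.sub_apply]
    have e3 : (∫ s in Icc (0:ℝ) t, (σ (ζ' s) (ψ s) - σ (ζ' s) (φ s)))
        = (∫ s in Icc (0:ℝ) t, σ (ζ' s) (ψ s)) - (∫ s in Icc (0:ℝ) t, σ (ζ' s) (φ s)) :=
      integral_sub (hintσζψ t ht) (hintσζφ t ht)
    rw [e1, e2, e3, hη'', hζ'']
    abel
  -- the key Gronwall-type inequality
  set Cc : ℝ := 2*L + L^2*M with hCcdef
  have hCc0 : 0 ≤ Cc := by positivity
  have key : ∀ t ∈ Icc (0:ℝ) T, D t ≤ (2*Rb) + Cc * ∫ s in Icc (0:ℝ) t, D s := by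
    intro t ht
    -- pointwise estimate for any t' ≤ t
    have hDint : ∀ t' : ℝ, IntegrableOn D (Icc 0 t') volume := fun t' => hDc.integrableOn_Icc
    have hDψint : IntegrableOn (fun s => D s * ‖ψ s‖) (Icc 0 t) volume := by
      refine Integrable.bdd_mul ((hψint.mono_set (Icc_subset_Icc le_rfl ht.2)).norm)
        hDc.aestronglyMeasurable (c := ‖η - ζ‖) (Filter.Eventually.of_forall fun s => ?_)
      rw [Real.norm_eq_abs, abs_of_nonneg (hD0 s)]
      exact hDbd s
    have hpt : ∀ t' ∈ Icc (0:ℝ) t, D t' ≤ Rb + L * (∫ s in Icc (0:ℝ) t, D s)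
        + L * (∫ s in Icc (0:ℝ) t, D s * ‖ψ s‖) := by
      intro t' ht'
      have ht'T : t' ∈ Icc (0:ℝ) T := ⟨ht'.1, ht'.2.trans ht.2⟩
      have hb1 : ‖∫ s in Icc (0:ℝ) t', (b (η' s) - b (ζ' s))‖
          ≤ L * (∫ s in Icc (0:ℝ) t, D s) := by
        calc ‖∫ s in Icc (0:ℝ) t', (b (η' s) - b (ζ' s))‖
            ≤ ∫ s in Icc (0:ℝ) t', ‖b (η' s) - b (ζ' s)‖ := norm_integral_le_integral_norm _
          _ ≤ ∫ s in Icc (0:ℝ) t', L * D s := by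
              refine setIntegral_mono_on ((hb.continuous.comp hηc).sub
                (hb.continuous.comp hζc)).norm.integrableOn_Icc
                ((continuous_const.mul hDc : Continuous fun s => L * D s).integrableOn_Icc) measurableSet_Icc fun s _ => ?_
              have := hb.dist_le_mul (η' s) (ζ' s)
              rw [dist_eq_norm, dist_eq_norm] at this
              exact this
          _ ≤ ∫ s in Icc (0:ℝ) t, L * D s := by
              refine setIntegral_mono_set ((continuous_const.mul hDc : Continuous fun s => L * D s).integrableOn_Icc)
                (Filter.Eventually.of_forall fun s => by positivity)
                (HasSubset.Subset.eventuallyLE (Icc_subset_Icc le_rfl ht'.2))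
          _ = L * ∫ s in Icc (0:ℝ) t, D s := by
              rw [integral_const_mul]
      have hb2 : ‖∫ s in Icc (0:ℝ) t', ((σ (η' s) - σ (ζ' s)) (ψ s))‖
          ≤ L * (∫ s in Icc (0:ℝ) t, D s * ‖ψ s‖) := by
        have hintd : IntegrableOn (fun s => (σ (η' s) - σ (ζ' s)) (ψ s)) (Icc 0 t') volume :=
          integrable_clm_apply (cσ := cσ + cσ) (hσηc.sub hσζc)
            (fun s => le_trans (norm_sub_le _ _) (by
              have := hσbd (η' s); have := hσbd (ζ' s); linarith))
            (hψint.mono_set (Icc_subset_Icc le_rfl ht'T.2))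
        calc ‖∫ s in Icc (0:ℝ) t', ((σ (η' s) - σ (ζ' s)) (ψ s))‖
            ≤ ∫ s in Icc (0:ℝ) t', ‖(σ (η' s) - σ (ζ' s)) (ψ s)‖ := norm_integral_le_integral_norm _
          _ ≤ ∫ s in Icc (0:ℝ) t', L * (D s * ‖ψ s‖) := by
              refine setIntegral_mono_on hintd.norm
                ((hDψint.mono_set (Icc_subset_Icc le_rfl ht'.2)).const_mul L)
                measurableSet_Icc fun s _ => ?_
              have h1 : ‖(σ (η' s) - σ (ζ' s)) (ψ s)‖ ≤ ‖σ (η' s) - σ (ζ' s)‖ * ‖ψ s‖ :=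
                (σ (η' s) - σ (ζ' s)).le_opNorm _
              have h2 : ‖σ (η' s) - σ (ζ' s)‖ ≤ L * D s := by
                have := hσ.dist_le_mul (η' s) (ζ' s)
                rw [dist_eq_norm, dist_eq_norm] at this
                exact this
              have := norm_nonneg (ψ s)
              nlinarith [norm_nonneg (σ (η' s) - σ (ζ' s)), hD0 s]
          _ ≤ ∫ s in Icc (0:ℝ) t, L * (D s * ‖ψ s‖) := by
              refine setIntegral_mono_set (hDψint.const_mul L)
                (Filter.Eventually.of_forall fun s => by
                  have := hD0 s; have := norm_nonneg (ψ s); positivity)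
                (HasSubset.Subset.eventuallyLE (Icc_subset_Icc le_rfl ht'.2))
          _ = L * ∫ s in Icc (0:ℝ) t, D s * ‖ψ s‖ := by rw [integral_const_mul]
      have hb3 : ‖∫ s in Icc (0:ℝ) t', (σ (ζ' s) (ψ s) - σ (ζ' s) (φ s))‖ ≤ Rb := hRb t' ht'T
      calc D t' = ‖(∫ s in Icc (0:ℝ) t', (b (η' s) - b (ζ' s)))
          + ((∫ s in Icc (0:ℝ) t', ((σ (η' s) - σ (ζ' s)) (ψ s)))
            + (∫ s in Icc (0:ℝ) t', (σ (ζ' s) (ψ s) - σ (ζ' s) (φ s))))‖ := by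
            show ‖η' t' - ζ' t'‖ = _
            rw [hiden t' ht'T]
        _ ≤ ‖∫ s in Icc (0:ℝ) t', (b (η' s) - b (ζ' s))‖
            + (‖∫ s in Icc (0:ℝ) t', ((σ (η' s) - σ (ζ' s)) (ψ s))‖
              + ‖∫ s in Icc (0:ℝ) t', (σ (ζ' s) (ψ s) - σ (ζ' s) (φ s))‖) :=
            (norm_add_le _ _).trans (by gcongr; exact norm_add_le _ _)
        _ ≤ Rb + L * (∫ s in Icc (0:ℝ) t, D s) + L * (∫ s in Icc (0:ℝ) t, D s * ‖ψ s‖) := by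
            have := hb1; have := hb2; have := hb3; linarith
    -- take the sup over t' ∈ [0,t]
    set v : ℝ := sSup (D '' Icc (0:ℝ) t) with hvdef
    have hne : (D '' Icc (0:ℝ) t).Nonempty := ⟨D t, ⟨t, ⟨ht.1, le_rfl⟩, rfl⟩⟩
    have hbddA : BddAbove (D '' Icc (0:ℝ) t) :=
      (isCompact_Icc.image hDc).bddAbove
    have hDv : ∀ s ∈ Icc (0:ℝ) t, D s ≤ v := fun s hs => le_csSup hbddA ⟨s, hs, rfl⟩
    have htv : D t ≤ v := hDv t ⟨ht.1, le_rfl⟩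
    have hv0 : 0 ≤ v := (hD0 t).trans htv
    have hvle : v ≤ Rb + L * (∫ s in Icc (0:ℝ) t, D s)
        + L * (∫ s in Icc (0:ℝ) t, D s * ‖ψ s‖) := by
      refine csSup_le hne ?_
      rintro x ⟨s, hs, rfl⟩
      exact hpt s hs
    -- Cauchy-Schwarz + AM-GM on the last term
    have hI0 : 0 ≤ ∫ s in Icc (0:ℝ) t, D s :=
      setIntegral_nonneg measurableSet_Icc fun s _ => hD0 s
    have hCS : (∫ s in Icc (0:ℝ) t, D s * ‖ψ s‖)
        ≤ Real.sqrt (v * ∫ s in Icc (0:ℝ) t, D s) * Real.sqrt M := by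
      haveI := hfin t
      have hcs := cs_integral (μ := volume.restrict (Icc (0:ℝ) t))
        (f := D) (g := fun s => ‖ψ s‖)
        (Filter.Eventually.of_forall hD0)
        (Filter.Eventually.of_forall fun s => norm_nonneg _)
        (MemLp.of_bound hDc.aestronglyMeasurable (‖η - ζ‖)
          (Filter.Eventually.of_forall fun s => by
            rw [Real.norm_eq_abs, abs_of_nonneg (hD0 s)]; exact hDbd s))
        ((hψL2.mono_measure (Measure.restrict_mono (Icc_subset_Icc le_rfl ht.2) le_rfl)).norm)
      have hD2 : (∫ s in Icc (0:ℝ) t, (D s)^2) ≤ v * ∫ s in Icc (0:ℝ) t, D s := by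
        rw [← integral_const_mul]
        refine setIntegral_mono_on ((hDc.pow 2).integrableOn_Icc)
          ((continuous_const.mul hDc : Continuous fun s => v * D s).integrableOn_Icc) measurableSet_Icc fun s hs => ?_
        have h1 := hDv s hs
        have h2 := hD0 s
        nlinarith
      have hψ2 : (∫ s in Icc (0:ℝ) t, ‖ψ s‖^2) ≤ M := by
        refine le_trans ?_ hψbd
        refine setIntegral_mono_set ?_ (Filter.Eventually.of_forall fun s => by positivity)
          (HasSubset.Subset.eventuallyLE (Icc_subset_Icc le_rfl ht.2))
        haveI := hfin T
        exact hψL2.norm.integrable_sq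
      calc (∫ s in Icc (0:ℝ) t, D s * ‖ψ s‖)
          ≤ Real.sqrt (∫ s in Icc (0:ℝ) t, (D s)^2) * Real.sqrt (∫ s in Icc (0:ℝ) t, ‖ψ s‖^2) := hcs
        _ ≤ Real.sqrt (v * ∫ s in Icc (0:ℝ) t, D s) * Real.sqrt M :=
            mul_le_mul (Real.sqrt_le_sqrt hD2) (Real.sqrt_le_sqrt hψ2)
              (Real.sqrt_nonneg _) (Real.sqrt_nonneg _)
    have hAM : L * (Real.sqrt (v * ∫ s in Icc (0:ℝ) t, D s) * Real.sqrt M)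
        ≤ (v + L^2*M*(∫ s in Icc (0:ℝ) t, D s)) / 2 := by
      have h1 : L * (Real.sqrt (v * ∫ s in Icc (0:ℝ) t, D s) * Real.sqrt M)
          = Real.sqrt (v * (L^2*M*(∫ s in Icc (0:ℝ) t, D s))) := by
        rw [show v * (L^2*M*(∫ s in Icc (0:ℝ) t, D s))
            = (L^2) * (M * (v * (∫ s in Icc (0:ℝ) t, D s))) by ring]
        rw [Real.sqrt_mul (sq_nonneg L), Real.sqrt_mul hM.le, Real.sqrt_sq hL0,
          Real.sqrt_mul hv0]
        ring
      rw [h1]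
      exact sqrt_mul_le_half _ _ hv0 (by positivity)
    have hnext : L * (∫ s in Icc (0:ℝ) t, D s * ‖ψ s‖)
        ≤ (v + L^2*M*(∫ s in Icc (0:ℝ) t, D s)) / 2 :=
      (mul_le_mul_of_nonneg_left hCS hL0).trans hAM
    have : v ≤ (2*Rb) + Cc * ∫ s in Icc (0:ℝ) t, D s := by
      rw [hCcdef]
      nlinarith [hvle, hnext]
    exact htv.trans this
  -- conclude with Gronwall
  intro t ht
  exact gronwall_aux hT.le (by positivity) hCc0 hDc hD0 key t ht
end master

/-- **Continuity of the solution map under weak `L²` convergence of controls.**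
Under Assumption A, if `φ_n → φ` weakly in `L²([0,T];ℝ^k)` with `∫₀ᵀ‖φ_n‖² ≤ M`, then
the corresponding solutions satisfy `ξ₀^{φ_n} → ξ₀^φ` uniformly on `[0,T]`. -/
theorem solution_map_weakly_continuous
    {T : ℝ} (hT : 0 < T) {d k m : ℕ}
    (x₀ : EuclideanSpace ℝ (Fin d))
    (b : EuclideanSpace ℝ (Fin d) → EuclideanSpace ℝ (Fin d))
    (σ : EuclideanSpace ℝ (Fin d) → (EuclideanSpace ℝ (Fin k) →L[ℝ] EuclideanSpace ℝ (Fin d)))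
    (h : EuclideanSpace ℝ (Fin d) → EuclideanSpace ℝ (Fin m))
    (clip : ℝ≥0) (hb : LipschitzWith clip b) (hσ : LipschitzWith clip σ)
    (hh : LipschitzWith clip h)
    (cσ : ℝ) (hσbd : ∀ x, ‖σ x‖ ≤ cσ)
    (M : ℝ) (hM : 0 < M)
    (φn : ℕ → ℝ → EuclideanSpace ℝ (Fin k)) (φ : ℝ → EuclideanSpace ℝ (Fin k))
    (hφnL2 : ∀ n, L2on T (φn n)) (hφL2 : L2on T φ)
    (hφbd : ∀ n, (∫ s in Set.Icc (0:ℝ) T, ‖φn n s‖ ^ 2) ≤ M)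
    (hweak : ∀ f : ℝ → EuclideanSpace ℝ (Fin k), L2on T f →
      Filter.Tendsto (fun n => ∫ s in Set.Icc (0:ℝ) T, ⟪φn n s, f s⟫)
        Filter.atTop (𝓝 (∫ s in Set.Icc (0:ℝ) T, ⟪φ s, f s⟫)))
    (ξn : ℕ → Pth T d) (ξ : Pth T d)
    (hξn : ∀ n, IsSol hT x₀ b σ (φn n) (ξn n)) (hξ : IsSol hT x₀ b σ φ ξ) :
    Filter.Tendsto ξn Filter.atTop (𝓝 ξ) := by
  have hσc : Continuous σ := hσ.continuous
  have hEb0 : (0:ℝ) < Real.exp ((2*(clip:ℝ) + (clip:ℝ)^2*M)*T) := Real.exp_pos _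
  rw [Metric.tendsto_atTop]
  intro ε hε
  set Eb : ℝ := Real.exp ((2*(clip:ℝ) + (clip:ℝ)^2*M)*T) with hEbdef
  set ρ : ℝ := ε / (4*Eb + 1) with hρdef
  have hρ0 : 0 < ρ := div_pos hε (by linarith)
  have hunif := R_uniform hT σ hσc cσ hσbd ξ φn φ hφnL2 hφL2 M hφbd hweak ρ hρ0
  obtain ⟨N, hN⟩ := eventually_atTop.1 hunif
  refine ⟨N, fun n hn => ?_⟩
  have hmaster := master_estimate hT x₀ b σ clip hb hσ cσ hσbd M hM (φn n) φ (hφnL2 n) hφL2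
    (hφbd n) (ξn n) ξ (hξn n) hξ ρ hρ0.le (hN n hn)
  have hbd0 : (0:ℝ) ≤ 2*ρ*Eb := by positivity
  have hd : dist (ξn n) ξ ≤ 2*ρ*Eb := by
    rw [ContinuousMap.dist_le hbd0]
    intro x
    have hx := hmaster x.1 x.2
    have h1 : pext hT.le (ξn n) x.1 = ξn n x := by
      rw [pext, Set.projIcc_val]
    have h2 : pext hT.le ξ x.1 = ξ x := by
      rw [pext, Set.projIcc_val]
    rw [dist_eq_norm]
    calc ‖ξn n x - ξ x‖ = ‖pext hT.le (ξn n) x.1 - pext hT.le ξ x.1‖ := by rw [h1, h2]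
      _ ≤ 2*ρ*Eb := by
          rw [hEbdef]
          calc ‖pext hT.le (ξn n) x.1 - pext hT.le ξ x.1‖
              ≤ (2*ρ) * Real.exp ((2*(clip:ℝ) + (clip:ℝ)^2*M)*T) := hx
            _ = 2*ρ*Real.exp ((2*(clip:ℝ) + (clip:ℝ)^2*M)*T) := by ring
  have hlt : 2*ρ*Eb < ε := by
    have hq : ρ * (4*Eb+1) = ε := div_mul_cancel₀ _ (by linarith)
    nlinarith [hρ0, hEb0]
  exact lt_of_le_of_lt hd hlt

end
end

section
/- Let h: ℝ^d → ℝ^m be Lipschitz, let K ⊆ C_d be compact, and let (ψ_n) be a sequence in L²_m with sup_n ∫₀ᵀ‖ψ_n(s)‖² ds < ∞ converging weakly in L²_m to ψ. Then sup_{η∈K} | ∫₀ᵀ ⟨h(η(s)), ψ_n(s) − ψ(s)⟩ ds | → 0 as n → ∞. -/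
open MeasureTheory Set Filter Topology
open scoped RealInnerProductSpace ENNReal NNReal

noncomputable section

private lemma int_sq_of_L2 {T : ℝ} {p : ℕ} {f : ℝ → EuclideanSpace ℝ (Fin p)}
    (hf : L2on T f) :
    Integrable (fun s => ‖f s‖ ^ 2) (volume.restrict (Set.Icc (0:ℝ) T)) := by
  have hf' : MemLp f 2 (volume.restrict (Set.Icc (0:ℝ) T)) := hf
  have := hf'.integrable_norm_rpow (by norm_num) (by norm_num)
  have h2 : ((2:ℝ≥0∞)).toReal = ((2:ℕ):ℝ) := by norm_num
  simpa [h2, Real.rpow_natCast] using this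

/-- **Uniform convergence over compact path sets of the weak-`L²` pairings (eq. (6.500)).**
If `h` is Lipschitz, `K ⊆ C_d` is compact and `ψ_n → ψ` weakly in `L²` with bounded norms,
then `sup_{η ∈ K} |∫₀ᵀ ⟨h(η(s)), ψ_n(s) − ψ(s)⟩ ds| → 0`. -/
theorem pairing_uniform_convergence_on_compacts
    {T : ℝ} (hT : 0 < T) {d m : ℕ}
    (h : EuclideanSpace ℝ (Fin d) → EuclideanSpace ℝ (Fin m))
    (clip : ℝ≥0) (hh : LipschitzWith clip h)
    (K : Set (Pth T d)) (hK : IsCompact K)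
    (ψn : ℕ → ℝ → EuclideanSpace ℝ (Fin m)) (ψ : ℝ → EuclideanSpace ℝ (Fin m))
    (hψnL2 : ∀ n, L2on T (ψn n)) (hψL2 : L2on T ψ)
    (hψbd : ∃ M : ℝ, ∀ n, (∫ s in Set.Icc (0:ℝ) T, ‖ψn n s‖ ^ 2) ≤ M)
    (hweak : ∀ f : ℝ → EuclideanSpace ℝ (Fin m), L2on T f →
      Filter.Tendsto (fun n => ∫ s in Set.Icc (0:ℝ) T, ⟪ψn n s, f s⟫)
        Filter.atTop (𝓝 (∫ s in Set.Icc (0:ℝ) T, ⟪ψ s, f s⟫))) :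
    ∀ δ > (0:ℝ), ∃ N : ℕ, ∀ n ≥ N, ∀ η ∈ K,
      |∫ s in Set.Icc (0:ℝ) T, ⟪h (pext hT.le η s), ψn n s - ψ s⟫| < δ := by
  intro δ hδ
  set μ := volume.restrict (Set.Icc (0:ℝ) T) with hμdef
  haveI : IsFiniteMeasure μ := by
    constructor
    rw [hμdef, Measure.restrict_apply_univ, Real.volume_Icc]
    exact ENNReal.ofReal_lt_top
  obtain ⟨M, hM⟩ := hψbd
  set D := ∫ s in Set.Icc (0:ℝ) T, ‖ψ s‖ ^ 2 with hDdef
  have hD0 : 0 ≤ D := integral_nonneg fun s => sq_nonneg _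
  have hM0 : (0:ℝ) ≤ max M 0 := le_max_right _ _
  set C := (T + 2 * max M 0 + 2 * D) / 2 with hCdef
  have hC0 : 0 < C := by rw [hCdef]; linarith
  -- integrability facts
  have hψnInt : ∀ n, Integrable (ψn n) μ :=
    fun n => ((hψnL2 n).mono_exponent (by norm_num)).integrable le_rfl
  have hψInt : Integrable ψ μ :=
    (hψL2.mono_exponent (by norm_num)).integrable le_rfl
  have hφInt : ∀ n, Integrable (fun s => ψn n s - ψ s) μ := fun n => (hψnInt n).sub hψInt
  -- uniform L¹ bound on ψn - ψ
  have hL1 : ∀ n, (∫ s in Set.Icc (0:ℝ) T, ‖ψn n s - ψ s‖) ≤ C := by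
    intro n
    have hφ2 : L2on T (fun s => ψn n s - ψ s) := MemLp.sub (hψnL2 n) hψL2
    have hsq := int_sq_of_L2 hφ2
    have h1 : Integrable (fun s => (1 + ‖ψn n s - ψ s‖ ^ 2) / 2) μ :=
      ((integrable_const 1).add hsq).div_const 2
    have step1 : (∫ s in Set.Icc (0:ℝ) T, ‖ψn n s - ψ s‖)
        ≤ ∫ s in Set.Icc (0:ℝ) T, (1 + ‖ψn n s - ψ s‖ ^ 2) / 2 :=
      integral_mono_of_nonneg (Filter.Eventually.of_forall fun s => norm_nonneg _) h1
        (Filter.Eventually.of_forall fun s => by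
          nlinarith [sq_nonneg (‖ψn n s - ψ s‖ - 1)])
    have step2 : (∫ s in Set.Icc (0:ℝ) T, (1 + ‖ψn n s - ψ s‖ ^ 2) / 2)
        = (T + ∫ s in Set.Icc (0:ℝ) T, ‖ψn n s - ψ s‖ ^ 2) / 2 := by
      rw [integral_div, integral_add (integrable_const 1) hsq, integral_const]
      simp [Real.volume_Icc, ENNReal.toReal_ofReal hT.le, hT.le]
    have hsqsum : Integrable (fun s => 2 * ‖ψn n s‖ ^ 2 + 2 * ‖ψ s‖ ^ 2) μ :=
      ((int_sq_of_L2 (hψnL2 n)).const_mul 2).add ((int_sq_of_L2 hψL2).const_mul 2)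
    have step3 : (∫ s in Set.Icc (0:ℝ) T, ‖ψn n s - ψ s‖ ^ 2)
        ≤ 2 * max M 0 + 2 * D := by
      have hmono : (∫ s in Set.Icc (0:ℝ) T, ‖ψn n s - ψ s‖ ^ 2)
          ≤ ∫ s in Set.Icc (0:ℝ) T, (2 * ‖ψn n s‖ ^ 2 + 2 * ‖ψ s‖ ^ 2) :=
        integral_mono_of_nonneg (Filter.Eventually.of_forall fun s => sq_nonneg _) hsqsum
          (Filter.Eventually.of_forall fun s => by
            have h1 : ‖ψn n s - ψ s‖ ≤ ‖ψn n s‖ + ‖ψ s‖ := norm_sub_le _ _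
            have h2 : ‖ψn n s - ψ s‖ ^ 2 ≤ (‖ψn n s‖ + ‖ψ s‖) ^ 2 :=
              pow_le_pow_left₀ (norm_nonneg _) h1 2
            simp only []
            nlinarith [sq_nonneg (‖ψn n s‖ - ‖ψ s‖)])
      have heq : (∫ s in Set.Icc (0:ℝ) T, (2 * ‖ψn n s‖ ^ 2 + 2 * ‖ψ s‖ ^ 2))
          = 2 * (∫ s in Set.Icc (0:ℝ) T, ‖ψn n s‖ ^ 2) + 2 * D := by
        rw [integral_add ((int_sq_of_L2 (hψnL2 n)).const_mul 2)
          ((int_sq_of_L2 hψL2).const_mul 2), integral_const_mul, integral_const_mul]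
      have := hM n
      have hle : (∫ s in Set.Icc (0:ℝ) T, ‖ψn n s‖ ^ 2) ≤ max M 0 :=
        le_trans this (le_max_left _ _)
      rw [heq] at hmono
      linarith
    rw [step2] at step1
    rw [hCdef]
    linarith
  -- each h ∘ pext η is bounded, continuous, in L²
  have hbd : ∀ η : Pth T d, ∃ Cf : ℝ, ∀ s : ℝ, ‖h (pext hT.le η s)‖ ≤ Cf := by
    intro η
    have hc2 : Continuous fun p : Set.Icc (0:ℝ) T => ‖h (η p)‖ :=
      (hh.continuous.comp η.continuous).norm
    obtain ⟨Cf, hCf⟩ := (isCompact_range hc2).bddAbove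
    exact ⟨Cf, fun s => hCf ⟨_, rfl⟩⟩
  have hcont : ∀ η : Pth T d, Continuous (fun s => h (pext hT.le η s)) := by
    intro η
    exact hh.continuous.comp (η.continuous.comp continuous_projIcc)
  have hfL2 : ∀ η : Pth T d, L2on T (fun s => h (pext hT.le η s)) := by
    intro η
    obtain ⟨Cf, hCf⟩ := hbd η
    exact MemLp.of_bound ((hcont η).aestronglyMeasurable) Cf
      (Filter.Eventually.of_forall hCf)
  -- pairing of a bounded measurable function with an integrable one is integrable
  have hInt : ∀ (f g : ℝ → EuclideanSpace ℝ (Fin m)), Continuous f →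
      (∃ Cf : ℝ, ∀ s, ‖f s‖ ≤ Cf) → Integrable g μ →
      Integrable (fun s => ⟪g s, f s⟫) μ := by
    intro f g hfc ⟨Cf, hCf⟩ hg
    refine Integrable.mono' (hg.norm.const_mul Cf) ?_ ?_
    · exact AEStronglyMeasurable.inner hg.aestronglyMeasurable
        hfc.aestronglyMeasurable
    · refine Filter.Eventually.of_forall fun s => ?_
      have h1 : |⟪g s, f s⟫| ≤ ‖g s‖ * ‖f s‖ := abs_real_inner_le_norm _ _
      have h2 : ‖g s‖ * ‖f s‖ ≤ Cf * ‖g s‖ := by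
        rw [mul_comm]
        exact mul_le_mul_of_nonneg_right (hCf s) (norm_nonneg _)
      calc ‖⟪g s, f s⟫‖ = |⟪g s, f s⟫| := Real.norm_eq_abs _
        _ ≤ Cf * ‖g s‖ := le_trans h1 h2
  -- the pairing with a fixed path converges
  have key : ∀ x : Pth T d, ∃ Nx : ℕ, ∀ n ≥ Nx,
      |∫ s in Set.Icc (0:ℝ) T, ⟪h (pext hT.le x s), ψn n s - ψ s⟫| < δ / 2 := by
    intro x
    set f : ℝ → EuclideanSpace ℝ (Fin m) := fun s => h (pext hT.le x s) with hfdef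
    have ht := hweak f (hfL2 x)
    have ht2 : Tendsto (fun n => (∫ s in Set.Icc (0:ℝ) T, ⟪ψn n s, f s⟫)
        - ∫ s in Set.Icc (0:ℝ) T, ⟪ψ s, f s⟫) atTop (𝓝 0) := by
      simpa [hμdef] using ht.sub (tendsto_const_nhds :
        Tendsto (fun _ : ℕ => ∫ s in Set.Icc (0:ℝ) T, ⟪ψ s, f s⟫) atTop _)
    obtain ⟨Nx, hNx⟩ := (Metric.tendsto_atTop.mp ht2) (δ / 2) (by positivity)
    refine ⟨Nx, fun n hn => ?_⟩
    have hsplit : (∫ s in Set.Icc (0:ℝ) T, ⟪h (pext hT.le x s), ψn n s - ψ s⟫)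
        = (∫ s in Set.Icc (0:ℝ) T, ⟪ψn n s, f s⟫)
          - ∫ s in Set.Icc (0:ℝ) T, ⟪ψ s, f s⟫ := by
      rw [← integral_sub (hInt f (ψn n) (hcont x) (hbd x) (hψnInt n))
        (hInt f ψ (hcont x) (hbd x) hψInt)]
      refine integral_congr_ae (Filter.Eventually.of_forall fun s => ?_)
      simp only [inner_sub_right]
      rw [real_inner_comm (f s) (ψn n s), real_inner_comm (f s) (ψ s)]
    rw [hsplit]
    have := hNx n hn
    rwa [Real.dist_eq, sub_zero] at this
  -- finite cover of K by ε-balls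
  set ε : ℝ := δ / (2 * ((clip : ℝ) + 1) * C) with hεdef
  have hclip0 : (0:ℝ) ≤ (clip : ℝ) := clip.coe_nonneg
  have hε0 : 0 < ε := by
    rw [hεdef]
    positivity
  obtain ⟨t, htK, htfin, htcover⟩ := hK.finite_cover_balls hε0
  choose Nf hNf using key
  set N := htfin.toFinset.sup Nf with hNdef
  refine ⟨N, fun n hn η hη => ?_⟩
  obtain ⟨x, hxt, hxball⟩ := Set.mem_iUnion₂.mp (htcover hη)
  have hdist : dist η x < ε := Metric.mem_ball.mp hxball
  have hnx : Nf x ≤ n := le_trans (Finset.le_sup (htfin.mem_toFinset.mpr hxt)) hn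
  -- first piece estimate
  have hDiffInt : Integrable
      (fun s => ⟪ψn n s - ψ s, h (pext hT.le η s) - h (pext hT.le x s)⟫) μ := by
    refine hInt _ _ ((hcont η).sub (hcont x)) ?_ (hφInt n)
    obtain ⟨C1, hC1⟩ := hbd η
    obtain ⟨C2, hC2⟩ := hbd x
    exact ⟨C1 + C2, fun s => le_trans (norm_sub_le _ _) (add_le_add (hC1 s) (hC2 s))⟩
  have hxInt : Integrable (fun s => ⟪ψn n s - ψ s, h (pext hT.le x s)⟫) μ :=
    hInt _ _ (hcont x) (hbd x) (hφInt n)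
  have hsplit2 : (∫ s in Set.Icc (0:ℝ) T, ⟪h (pext hT.le η s), ψn n s - ψ s⟫)
      = (∫ s in Set.Icc (0:ℝ) T, ⟪ψn n s - ψ s, h (pext hT.le η s) - h (pext hT.le x s)⟫)
        + ∫ s in Set.Icc (0:ℝ) T, ⟪h (pext hT.le x s), ψn n s - ψ s⟫ := by
    have hxInt' : Integrable (fun s => ⟪h (pext hT.le x s), ψn n s - ψ s⟫) μ := by
      refine (hxInt.congr (Filter.Eventually.of_forall fun s => ?_))
      exact real_inner_comm _ _
    rw [← integral_add hDiffInt hxInt']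
    refine integral_congr_ae (Filter.Eventually.of_forall fun s => ?_)
    simp only [inner_sub_right, inner_sub_left]
    linarith [real_inner_comm (ψn n s) (h (pext hT.le η s)),
      real_inner_comm (ψ s) (h (pext hT.le η s)),
      real_inner_comm (ψn n s) (h (pext hT.le x s)),
      real_inner_comm (ψ s) (h (pext hT.le x s))]
  have hfirst : |∫ s in Set.Icc (0:ℝ) T,
      ⟪ψn n s - ψ s, h (pext hT.le η s) - h (pext hT.le x s)⟫| ≤ (clip : ℝ) * ε * C := by
    have habs : |∫ s in Set.Icc (0:ℝ) T,
        ⟪ψn n s - ψ s, h (pext hT.le η s) - h (pext hT.le x s)⟫|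
        ≤ ∫ s in Set.Icc (0:ℝ) T,
          ‖⟪ψn n s - ψ s, h (pext hT.le η s) - h (pext hT.le x s)⟫‖ := by
      simpa [Real.norm_eq_abs] using norm_integral_le_integral_norm
        (μ := μ) (fun s => ⟪ψn n s - ψ s, h (pext hT.le η s) - h (pext hT.le x s)⟫)
    have hmono : (∫ s in Set.Icc (0:ℝ) T,
        ‖⟪ψn n s - ψ s, h (pext hT.le η s) - h (pext hT.le x s)⟫‖)
        ≤ ∫ s in Set.Icc (0:ℝ) T, ((clip : ℝ) * ε) * ‖ψn n s - ψ s‖ := by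
      refine integral_mono_of_nonneg (Filter.Eventually.of_forall fun s => norm_nonneg _)
        (((hφInt n).norm.const_mul _)) (Filter.Eventually.of_forall fun s => ?_)
      have h1 : ‖⟪ψn n s - ψ s, h (pext hT.le η s) - h (pext hT.le x s)⟫‖
          ≤ ‖ψn n s - ψ s‖ * ‖h (pext hT.le η s) - h (pext hT.le x s)‖ := by
        rw [Real.norm_eq_abs]; exact abs_real_inner_le_norm _ _
      have h2 : ‖h (pext hT.le η s) - h (pext hT.le x s)‖ ≤ (clip : ℝ) * ε := by
        have h3 : dist (h (pext hT.le η s)) (h (pext hT.le x s))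
            ≤ (clip : ℝ) * dist (pext hT.le η s) (pext hT.le x s) := hh.dist_le_mul _ _
        have h4 : dist (pext hT.le η s) (pext hT.le x s) ≤ dist η x :=
          ContinuousMap.dist_apply_le_dist _
        rw [← dist_eq_norm]
        calc dist (h (pext hT.le η s)) (h (pext hT.le x s))
            ≤ (clip : ℝ) * dist η x := le_trans h3 (mul_le_mul_of_nonneg_left h4 hclip0)
          _ ≤ (clip : ℝ) * ε := mul_le_mul_of_nonneg_left hdist.le hclip0
      calc ‖⟪ψn n s - ψ s, h (pext hT.le η s) - h (pext hT.le x s)⟫‖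
          ≤ ‖ψn n s - ψ s‖ * ‖h (pext hT.le η s) - h (pext hT.le x s)‖ := h1
        _ ≤ ‖ψn n s - ψ s‖ * ((clip : ℝ) * ε) :=
            mul_le_mul_of_nonneg_left h2 (norm_nonneg _)
        _ = ((clip : ℝ) * ε) * ‖ψn n s - ψ s‖ := by ring
    have hconst : (∫ s in Set.Icc (0:ℝ) T, ((clip : ℝ) * ε) * ‖ψn n s - ψ s‖)
        = ((clip : ℝ) * ε) * ∫ s in Set.Icc (0:ℝ) T, ‖ψn n s - ψ s‖ :=
      integral_const_mul _ _
    have hfinal : ((clip : ℝ) * ε) * (∫ s in Set.Icc (0:ℝ) T, ‖ψn n s - ψ s‖)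
        ≤ ((clip : ℝ) * ε) * C :=
      mul_le_mul_of_nonneg_left (hL1 n) (by positivity)
    rw [hconst] at hmono
    calc |∫ s in Set.Icc (0:ℝ) T,
        ⟪ψn n s - ψ s, h (pext hT.le η s) - h (pext hT.le x s)⟫|
        ≤ ((clip : ℝ) * ε) * ∫ s in Set.Icc (0:ℝ) T, ‖ψn n s - ψ s‖ :=
          le_trans habs hmono
      _ ≤ (clip : ℝ) * ε * C := hfinal
  have hεbound : (clip : ℝ) * ε * C ≤ δ / 2 := by
    rw [hεdef]
    have hC' : C ≠ 0 := ne_of_gt hC0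
    have hclip1 : (0:ℝ) < (clip : ℝ) + 1 := by linarith
    have heq : (clip : ℝ) * (δ / (2 * ((clip : ℝ) + 1) * C)) * C
        = δ / 2 * ((clip : ℝ) / ((clip : ℝ) + 1)) := by
      field_simp
    rw [heq]
    have hratio : (clip : ℝ) / ((clip : ℝ) + 1) ≤ 1 := by
      rw [div_le_one hclip1]; linarith
    nlinarith
  have hsecond := hNf x n hnx
  calc |∫ s in Set.Icc (0:ℝ) T, ⟪h (pext hT.le η s), ψn n s - ψ s⟫|
      ≤ |∫ s in Set.Icc (0:ℝ) T,
          ⟪ψn n s - ψ s, h (pext hT.le η s) - h (pext hT.le x s)⟫|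
        + |∫ s in Set.Icc (0:ℝ) T, ⟪h (pext hT.le x s), ψn n s - ψ s⟫| := by
        rw [hsplit2]; exact abs_add_le _ _
    _ < δ / 2 + δ / 2 := by
        have := le_trans hfirst hεbound
        linarith
    _ = δ := by ring

end
end

section
/- Under Assumption A, let Φ: C_d → ℝ be bounded and continuous and let M ∈ (0,∞). Then there exists κ ∈ (0,∞) such that, with K = {η ∈ C_d : J(η) ≤ κ}, for every (φ,ψ) ∈ L²_k × L²_m with ½∫₀ᵀ(‖φ(s)‖² + ‖ψ(s)‖²) ds ≤ M one has inf_{η∈C_d}[H(η, ξ₀^φ, ψ) + Φ(η) + J(η)] = inf_{η∈K}[H(η, ξ₀^φ, ψ) + Φ(η) + J(η)] and inf_{η∈C_d}[H(η, ξ₀^φ, ψ) + J(η)] = inf_{η∈K}[H(η, ξ₀^φ, ψ) + J(η)]. -/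
open MeasureTheory Set Filter Topology
open scoped ENNReal NNReal

noncomputable section

/-- The rate function `J`, with `inf ∅ = ∞` (`EReal`-valued). -/
def Jrate {T : ℝ} (hT : 0 < T) {d k : ℕ} (x₀ : EuclideanSpace ℝ (Fin d))
    (b : EuclideanSpace ℝ (Fin d) → EuclideanSpace ℝ (Fin d))
    (σ : EuclideanSpace ℝ (Fin d) → (EuclideanSpace ℝ (Fin k) →L[ℝ] EuclideanSpace ℝ (Fin d)))
    (η : Pth T d) : EReal :=
  sInf {z : EReal | ∃ φ : ℝ → EuclideanSpace ℝ (Fin k),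
    L2on T φ ∧ IsSol hT x₀ b σ φ η ∧
    z = ((2⁻¹ * ∫ s in Set.Icc (0:ℝ) T, ‖φ s‖ ^ 2 : ℝ) : EReal)}

/-- `H(η, η̃, ψ) = ½∫₀ᵀ ‖h(η(s)) − h(η̃(s)) − ψ(s)‖² ds`. -/
def Hfun {T : ℝ} (hT : 0 < T) {d m : ℕ}
    (h : EuclideanSpace ℝ (Fin d) → EuclideanSpace ℝ (Fin m))
    (η ηt : Pth T d) (ψ : ℝ → EuclideanSpace ℝ (Fin m)) : ℝ :=
  2⁻¹ * ∫ s in Set.Icc (0:ℝ) T, ‖h (pext hT.le η s) - h (pext hT.le ηt s) - ψ s‖ ^ 2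

/-- **Reduction of the variational problems to a fixed compact sublevel set of `J`.**
Under Assumption A, for bounded continuous `Φ` and `M > 0` there is `κ > 0` such that,
with `K = {J ≤ κ}`, for all `(φ,ψ)` with `½∫₀ᵀ(‖φ‖²+‖ψ‖²) ≤ M` both infima defining
`V₀^{φ,ψ}[Φ]` may be taken over `K` instead of all of `C_d`. -/
theorem variational_inf_reduction_to_compact
    {T : ℝ} (hT : 0 < T) {d k m : ℕ}
    (x₀ : EuclideanSpace ℝ (Fin d))
    (b : EuclideanSpace ℝ (Fin d) → EuclideanSpace ℝ (Fin d))
    (σ : EuclideanSpace ℝ (Fin d) → (EuclideanSpace ℝ (Fin k) →L[ℝ] EuclideanSpace ℝ (Fin d)))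
    (h : EuclideanSpace ℝ (Fin d) → EuclideanSpace ℝ (Fin m))
    (clip : ℝ≥0) (hb : LipschitzWith clip b) (hσ : LipschitzWith clip σ)
    (hh : LipschitzWith clip h)
    (cσ : ℝ) (hσbd : ∀ x, ‖σ x‖ ≤ cσ)
    (Φ : Pth T d → ℝ) (hΦc : Continuous Φ) (hΦb : ∃ C, ∀ η, |Φ η| ≤ C)
    (M : ℝ) (hM : 0 < M) :
    ∃ κ : ℝ, 0 < κ ∧
      ∀ (φ : ℝ → EuclideanSpace ℝ (Fin k)) (ψ : ℝ → EuclideanSpace ℝ (Fin m)),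
        L2on T φ → L2on T ψ →
        2⁻¹ * ((∫ s in Set.Icc (0:ℝ) T, ‖φ s‖ ^ 2) + ∫ s in Set.Icc (0:ℝ) T, ‖ψ s‖ ^ 2) ≤ M →
        ∀ ξφ : Pth T d, IsSol hT x₀ b σ φ ξφ →
          ((⨅ η : Pth T d,
              (((Hfun hT h η ξφ ψ + Φ η : ℝ) : EReal) + Jrate hT x₀ b σ η))
            = ⨅ η ∈ {η : Pth T d | Jrate hT x₀ b σ η ≤ ((κ : ℝ) : EReal)},
              (((Hfun hT h η ξφ ψ + Φ η : ℝ) : EReal) + Jrate hT x₀ b σ η)) ∧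
          ((⨅ η : Pth T d,
              (((Hfun hT h η ξφ ψ : ℝ) : EReal) + Jrate hT x₀ b σ η))
            = ⨅ η ∈ {η : Pth T d | Jrate hT x₀ b σ η ≤ ((κ : ℝ) : EReal)},
              (((Hfun hT h η ξφ ψ : ℝ) : EReal) + Jrate hT x₀ b σ η)) := by
  obtain ⟨C, hC⟩ := hΦb
  set C' := max C 0 with hC'def
  have hC'0 : (0:ℝ) ≤ C' := le_max_right _ _
  have hΦub : ∀ η, |Φ η| ≤ C' := fun η => (hC η).trans (le_max_left _ _)
  refine ⟨2*M + 2*C' + 1, by linarith, ?_⟩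
  intro φ ψ hφ hψ hbound ξφ hsol
  have hφ2 : 0 ≤ ∫ s in Set.Icc (0:ℝ) T, ‖φ s‖^2 :=
    integral_nonneg fun s => sq_nonneg _
  have hψ2 : 0 ≤ ∫ s in Set.Icc (0:ℝ) T, ‖ψ s‖^2 :=
    integral_nonneg fun s => sq_nonneg _
  have hφM : 2⁻¹ * ∫ s in Set.Icc (0:ℝ) T, ‖φ s‖^2 ≤ M := by linarith
  have hψM : 2⁻¹ * ∫ s in Set.Icc (0:ℝ) T, ‖ψ s‖^2 ≤ M := by linarith
  have hJle : Jrate hT x₀ b σ ξφ ≤ ((2⁻¹ * ∫ s in Set.Icc (0:ℝ) T, ‖φ s‖^2 : ℝ) : EReal) :=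
    sInf_le ⟨φ, hφ, hsol, rfl⟩
  have hJM : Jrate hT x₀ b σ ξφ ≤ ((M:ℝ):EReal) := hJle.trans (by exact_mod_cast hφM)
  have hHnn : ∀ η ηt, 0 ≤ Hfun hT h η ηt ψ := fun η ηt =>
    mul_nonneg (by norm_num) (integral_nonneg fun s => sq_nonneg _)
  have hHself : Hfun hT h ξφ ξφ ψ ≤ M := by
    have heq : Hfun hT h ξφ ξφ ψ = 2⁻¹ * ∫ s in Set.Icc (0:ℝ) T, ‖ψ s‖^2 := by
      simp [Hfun, sub_self, zero_sub, norm_neg]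
    rw [heq]; exact hψM
  have hmemK : Jrate hT x₀ b σ ξφ ≤ (((2*M + 2*C' + 1 : ℝ)):EReal) :=
    hJM.trans (by exact_mod_cast (by linarith : M ≤ 2*M + 2*C' + 1))
  have key : ∀ g : Pth T d → ℝ, (∀ η, -C' ≤ g η) → g ξφ ≤ M + C' →
      (⨅ η : Pth T d, ((g η : ℝ) : EReal) + Jrate hT x₀ b σ η)
        = ⨅ η ∈ {η : Pth T d | Jrate hT x₀ b σ η ≤ (((2*M + 2*C' + 1 : ℝ)):EReal)},
            ((g η : ℝ) : EReal) + Jrate hT x₀ b σ η := by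
    intro g hg1 hg2
    apply le_antisymm
    · exact le_iInf₂ fun η _ => iInf_le _ η
    · refine le_iInf fun η => ?_
      by_cases hη : Jrate hT x₀ b σ η ≤ (((2*M + 2*C' + 1 : ℝ)):EReal)
      · exact iInf₂_le η hη
      · calc (⨅ η ∈ {η : Pth T d | Jrate hT x₀ b σ η ≤ (((2*M + 2*C' + 1 : ℝ)):EReal)},
                ((g η : ℝ) : EReal) + Jrate hT x₀ b σ η)
            ≤ ((g ξφ : ℝ) : EReal) + Jrate hT x₀ b σ ξφ := iInf₂_le ξφ hmemK
          _ ≤ (((M + C' : ℝ)):EReal) + ((M:ℝ):EReal) :=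
              add_le_add (EReal.coe_le_coe_iff.mpr hg2) hJM
          _ = (((2*M + C' : ℝ)):EReal) := by
              rw [← EReal.coe_add]; exact congrArg _ (by ring)
          _ ≤ (((-C' : ℝ)):EReal) + (((2*M + 2*C' + 1 : ℝ)):EReal) := by
              rw [← EReal.coe_add]
              exact EReal.coe_le_coe_iff.mpr (by linarith)
          _ ≤ ((g η : ℝ) : EReal) + Jrate hT x₀ b σ η :=
              add_le_add (EReal.coe_le_coe_iff.mpr (hg1 η)) (le_of_not_ge hη)
  constructor
  · exact key (fun η => Hfun hT h η ξφ ψ + Φ η)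
      (fun η => by have h1 := abs_le.mp (hΦub η); have h2 := hHnn η ξφ; linarith)
      (by have h1 := abs_le.mp (hΦub ξφ); linarith)
  · exact key (fun η => Hfun hT h η ξφ ψ)
      (fun η => le_trans (by linarith) (hHnn η ξφ))
      (by linarith)

end
end
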